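/- arXiv:2001.07955 — 7 statements merged into one kernel-verified Lean document; each statement's English description precedes it below -/
import Mathlib

section
/- Let G be a simple graph whose vertex set is V₁ ∪ V₂ with V₁ ∩ V₂ = {v₀} and such that every edge of G lies entirely within G[V₁] or G[V₂]. If f₁ ∈ SEDF⁰(G[V₁]) and f₂ ∈ SEDF⁰(G[V₂]), then the function f defined by f(e) = fᵢ(e) for e ∈ E(G[Vᵢ]) belongs to SEDF⁰(G), and f(G) = f₁(G[V₁]) + f₂(G[V₂]). -/
open Finset

open scoped Classical

/-- The weight of a vertex `v`: the sum of `f` over the edges of `G` incident to `v`. -/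
noncomputable def vweight {V : Type*} [Fintype V] [DecidableEq V]
    (G : SimpleGraph V) (f : Sym2 V → ℤ) (v : V) : ℤ :=
  ∑ e ∈ G.incidenceFinset v, f e

/-- `f` is a signed edge domination function of `G`: it takes values in `{1,-1}` on the
edges and for each edge `e = uv`, `∑_{e' ∈ N[e]} f e' = f(u) + f(v) - f(e) ≥ 1`. -/
noncomputable def IsSEDF {V : Type*} [Fintype V] [DecidableEq V]
    (G : SimpleGraph V) (f : Sym2 V → ℤ) : Prop :=
  (∀ e ∈ G.edgeFinset, f e = 1 ∨ f e = -1) ∧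
  ∀ ⦃u v⦄, G.Adj u v → 1 ≤ vweight G f u + vweight G f v - f s(u, v)

/-- `f ∈ SEDF⁰(G)`: `f` takes values in `{1,-1}` on the edges, every vertex has
nonnegative weight, and both endpoints of any positive edge have weights summing to ≥ 2. -/
noncomputable def IsSEDF0 {V : Type*} [Fintype V] [DecidableEq V]
    (G : SimpleGraph V) (f : Sym2 V → ℤ) : Prop :=
  (∀ e ∈ G.edgeFinset, f e = 1 ∨ f e = -1) ∧
  (∀ v, 0 ≤ vweight G f v) ∧
  ∀ ⦃u v⦄, G.Adj u v → f s(u, v) = 1 → 2 ≤ vweight G f u + vweight G f v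

/-- gluing SEDF⁰ functions of the two sides of a separable graph at a
cut vertex `v₀` yields an SEDF⁰ function of `G`, with total weight the sum of the two. -/
theorem stmt1 {V : Type*} [Fintype V] [DecidableEq V]
    (G H₁ H₂ : SimpleGraph V) (s₁ s₂ : Finset V) (v₀ : V)
    (hcover : s₁ ∪ s₂ = Finset.univ) (hint : s₁ ∩ s₂ = {v₀})
    (hH₁ : ∀ u v, H₁.Adj u v ↔ G.Adj u v ∧ u ∈ s₁ ∧ v ∈ s₁)
    (hH₂ : ∀ u v, H₂.Adj u v ↔ G.Adj u v ∧ u ∈ s₂ ∧ v ∈ s₂)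
    (hpart : ∀ u v, G.Adj u v → (u ∈ s₁ ∧ v ∈ s₁) ∨ (u ∈ s₂ ∧ v ∈ s₂))
    (f₁ f₂ f : Sym2 V → ℤ)
    (h₁ : IsSEDF0 H₁ f₁) (h₂ : IsSEDF0 H₂ f₂)
    (hf₁ : ∀ e ∈ H₁.edgeFinset, f e = f₁ e) (hf₂ : ∀ e ∈ H₂.edgeFinset, f e = f₂ e) :
    IsSEDF0 G f ∧
      ∑ e ∈ G.edgeFinset, f e =
        (∑ e ∈ H₁.edgeFinset, f₁ e) + ∑ e ∈ H₂.edgeFinset, f₂ e := by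

  classical
  have hGedge : G.edgeFinset = H₁.edgeFinset ∪ H₂.edgeFinset := by
    ext e
    induction e using Sym2.ind with
    | _ a b =>
      simp only [Finset.mem_union, SimpleGraph.mem_edgeFinset, SimpleGraph.mem_edgeSet,
        hH₁, hH₂]
      constructor
      · intro h
        rcases hpart a b h with ⟨ha, hb⟩ | ⟨ha, hb⟩
        · exact Or.inl ⟨h, ha, hb⟩
        · exact Or.inr ⟨h, ha, hb⟩
      · rintro (⟨h, _⟩ | ⟨h, _⟩) <;> exact h
  have hdisj : Disjoint H₁.edgeFinset H₂.edgeFinset := by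
    rw [Finset.disjoint_left]
    intro e he1 he2
    induction e using Sym2.ind with
    | _ a b =>
      rw [SimpleGraph.mem_edgeFinset, SimpleGraph.mem_edgeSet, hH₁] at he1
      rw [SimpleGraph.mem_edgeFinset, SimpleGraph.mem_edgeSet, hH₂] at he2
      have ha : a ∈ s₁ ∩ s₂ := Finset.mem_inter.2 ⟨he1.2.1, he2.2.1⟩
      have hb : b ∈ s₁ ∩ s₂ := Finset.mem_inter.2 ⟨he1.2.2, he2.2.2⟩
      rw [hint, Finset.mem_singleton] at ha hb
      exact he1.1.ne (ha.trans hb.symm)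
  have hsub1 : ∀ v, H₁.incidenceFinset v ⊆ H₁.edgeFinset := by
    intro v e he
    rw [SimpleGraph.mem_incidenceFinset] at he
    exact SimpleGraph.mem_edgeFinset.2 he.1
  have hsub2 : ∀ v, H₂.incidenceFinset v ⊆ H₂.edgeFinset := by
    intro v e he
    rw [SimpleGraph.mem_incidenceFinset] at he
    exact SimpleGraph.mem_edgeFinset.2 he.1
  have hinc : ∀ v, G.incidenceFinset v = H₁.incidenceFinset v ∪ H₂.incidenceFinset v := by
    intro v
    ext e
    simp only [Finset.mem_union, SimpleGraph.mem_incidenceFinset,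
      SimpleGraph.incidenceSet, Set.mem_setOf_eq, ← SimpleGraph.mem_edgeSet,
      ← SimpleGraph.mem_edgeFinset, hGedge, Finset.mem_union]
    tauto
  have hdisjinc : ∀ v, Disjoint (H₁.incidenceFinset v) (H₂.incidenceFinset v) :=
    fun v => Finset.disjoint_of_subset_left (hsub1 v)
      (Finset.disjoint_of_subset_right (hsub2 v) hdisj)
  have hw : ∀ v, vweight G f v = vweight H₁ f₁ v + vweight H₂ f₂ v := by
    intro v
    rw [vweight, vweight, vweight, hinc v, Finset.sum_union (hdisjinc v)]
    congr 1
    · exact Finset.sum_congr rfl fun e he => hf₁ e (hsub1 v he)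
    · exact Finset.sum_congr rfl fun e he => hf₂ e (hsub2 v he)
  refine ⟨⟨?_, ?_, ?_⟩, ?_⟩
  · intro e he
    rw [hGedge, Finset.mem_union] at he
    rcases he with he | he
    · rw [hf₁ e he]; exact h₁.1 e he
    · rw [hf₂ e he]; exact h₂.1 e he
  · intro v
    rw [hw v]
    have := h₁.2.1 v
    have := h₂.2.1 v
    linarith
  · intro u v hadj hpos
    rcases hpart u v hadj with ⟨hu, hv⟩ | ⟨hu, hv⟩
    · have h1adj : H₁.Adj u v := (hH₁ u v).2 ⟨hadj, hu, hv⟩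
      have hmem : s(u, v) ∈ H₁.edgeFinset := SimpleGraph.mem_edgeFinset.2 h1adj
      have hpos' : f₁ s(u, v) = 1 := by rw [← hf₁ _ hmem]; exact hpos
      have := h₁.2.2 h1adj hpos'
      have := h₂.2.1 u
      have := h₂.2.1 v
      rw [hw u, hw v]
      linarith
    · have h2adj : H₂.Adj u v := (hH₂ u v).2 ⟨hadj, hu, hv⟩
      have hmem : s(u, v) ∈ H₂.edgeFinset := SimpleGraph.mem_edgeFinset.2 h2adj
      have hpos' : f₂ s(u, v) = 1 := by rw [← hf₂ _ hmem]; exact hpos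
      have := h₂.2.2 h2adj hpos'
      have := h₁.2.1 u
      have := h₁.2.1 v
      rw [hw u, hw v]
      linarith
  · rw [hGedge, Finset.sum_union hdisj]
    congr 1
    · exact Finset.sum_congr rfl hf₁
    · exact Finset.sum_congr rfl hf₂
end

section
/- Let G be a simple graph with a vertex v₀ of degree 2 whose neighbours u₁, u₂ are adjacent in G. Let G' = G - u₁u₂ - v₀ (delete the edge u₁u₂ and the vertex v₀). If g ∈ SEDF⁰(G'), then the function f on E(G) defined by f(e) = g(e) for e ∈ E(G'), f(v₀u₁) = f(v₀u₂) = 1, and f(u₁u₂) = -1, belongs to SEDF⁰(G) and satisfies f(G) = g(G') + 1. -/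
open Finset

open scoped Classical

/-- `v₀` has degree 2 with adjacent neighbours `u₁ u₂`;
extending `g ∈ SEDF⁰(G - u₁u₂ - v₀)` by `+1, +1, -1` gives `f ∈ SEDF⁰(G)`
with `f(G) = g(G') + 1`. -/
theorem stmt2 {V : Type*} [Fintype V] [DecidableEq V]
    (G G' : SimpleGraph V) (v₀ u₁ u₂ : V) (hu : u₁ ≠ u₂)
    (hnbr : G.neighborFinset v₀ = {u₁, u₂})
    (hadj : G.Adj u₁ u₂)
    (hG' : ∀ a b, G'.Adj a b ↔ G.Adj a b ∧ s(a, b) ≠ s(u₁, u₂) ∧ a ≠ v₀ ∧ b ≠ v₀)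
    (g f : Sym2 V → ℤ) (hg : IsSEDF0 G' g)
    (hf0 : ∀ e ∈ G'.edgeFinset, f e = g e)
    (hf1 : f s(v₀, u₁) = 1) (hf2 : f s(v₀, u₂) = 1) (hf3 : f s(u₁, u₂) = -1) :
    IsSEDF0 G f ∧
      ∑ e ∈ G.edgeFinset, f e = (∑ e ∈ G'.edgeFinset, g e) + 1 := by
  obtain ⟨hg1, hg2, hg3⟩ := hg
  have hnb : ∀ w, G.Adj v₀ w ↔ w = u₁ ∨ w = u₂ := by
    intro w
    rw [← SimpleGraph.mem_neighborFinset, hnbr]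
    simp
  have hv1 : G.Adj v₀ u₁ := (hnb u₁).2 (Or.inl rfl)
  have hv2 : G.Adj v₀ u₂ := (hnb u₂).2 (Or.inr rfl)
  have hne1 : v₀ ≠ u₁ := hv1.ne
  have hne2 : v₀ ≠ u₂ := hv2.ne
  have he12 : s(v₀, u₁) ≠ s(v₀, u₂) := by
    intro h
    rw [Sym2.eq_iff] at h
    rcases h with ⟨-, h⟩ | ⟨h, -⟩
    exacts [hu h, hne2 h]
  have he13 : s(v₀, u₁) ≠ s(u₁, u₂) := by
    intro h
    rw [Sym2.eq_iff] at h
    rcases h with ⟨h, -⟩ | ⟨h, -⟩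
    exacts [hne1 h, hne2 h]
  have he23 : s(v₀, u₂) ≠ s(u₁, u₂) := by
    intro h
    rw [Sym2.eq_iff] at h
    rcases h with ⟨h, -⟩ | ⟨h, -⟩
    exacts [hne1 h, hne2 h]
  set T : Finset (Sym2 V) := {s(v₀, u₁), s(v₀, u₂), s(u₁, u₂)} with hT
  have hmem' : ∀ e : Sym2 V,
      e ∈ G'.edgeFinset ↔ e ∈ G.edgeFinset ∧ e ≠ s(u₁, u₂) ∧ v₀ ∉ e := by
    intro e
    induction e using Sym2.ind with
    | _ a b =>
      simp only [SimpleGraph.mem_edgeFinset, SimpleGraph.mem_edgeSet, hG', Sym2.mem_iff]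
      constructor
      · rintro ⟨h1, h2, h3, h4⟩
        refine ⟨h1, h2, ?_⟩
        push_neg
        exact ⟨fun h => h3 h.symm, fun h => h4 h.symm⟩
      · rintro ⟨h1, h2, h3⟩
        push_neg at h3
        exact ⟨h1, h2, fun h => h3.1 h.symm, fun h => h3.2 h.symm⟩
  have hv0edge : ∀ e ∈ G.edgeFinset, v₀ ∈ e → e = s(v₀, u₁) ∨ e = s(v₀, u₂) := by
    intro e
    induction e using Sym2.ind with
    | _ a b =>
      intro he hm
      rw [SimpleGraph.mem_edgeFinset, SimpleGraph.mem_edgeSet] at he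
      rw [Sym2.mem_iff] at hm
      rcases hm with rfl | rfl
      · rcases (hnb b).1 he with rfl | rfl
        · exact Or.inl rfl
        · exact Or.inr rfl
      · rcases (hnb a).1 he.symm with rfl | rfl
        · exact Or.inl Sym2.eq_swap
        · exact Or.inr Sym2.eq_swap
  have hsplit : G.edgeFinset = G'.edgeFinset ∪ T := by
    ext e
    simp only [Finset.mem_union, hmem', hT, Finset.mem_insert, Finset.mem_singleton]
    constructor
    · intro he
      by_cases h3 : e = s(u₁, u₂)
      · exact Or.inr (Or.inr (Or.inr h3))
      by_cases h0 : v₀ ∈ e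
      · rcases hv0edge e he h0 with h | h
        · exact Or.inr (Or.inl h)
        · exact Or.inr (Or.inr (Or.inl h))
      · exact Or.inl ⟨he, h3, h0⟩
    · rintro (⟨he, -, -⟩ | rfl | rfl | rfl)
      · exact he
      · rwa [SimpleGraph.mem_edgeFinset, SimpleGraph.mem_edgeSet]
      · rwa [SimpleGraph.mem_edgeFinset, SimpleGraph.mem_edgeSet]
      · rwa [SimpleGraph.mem_edgeFinset, SimpleGraph.mem_edgeSet]
  have hdisj : Disjoint G'.edgeFinset T := by
    rw [Finset.disjoint_left]
    intro e he heT
    rw [hmem'] at he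
    simp only [hT, Finset.mem_insert, Finset.mem_singleton] at heT
    rcases heT with rfl | rfl | rfl
    · exact he.2.2 (Sym2.mem_mk_left _ _)
    · exact he.2.2 (Sym2.mem_mk_left _ _)
    · exact he.2.1 rfl
  -- vertex-weight decomposition
  have hw : ∀ v, vweight G f v = vweight G' g v + ∑ e ∈ {e ∈ T | v ∈ e}, f e := by
    intro v
    unfold vweight
    rw [SimpleGraph.incidenceFinset_eq_filter, hsplit, Finset.filter_union,
      Finset.sum_union (Finset.disjoint_filter_filter hdisj)]
    congr 1
    rw [SimpleGraph.incidenceFinset_eq_filter]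
    exact Finset.sum_congr rfl fun e he => hf0 e (Finset.mem_filter.mp he).1
  have hc0 : ∑ e ∈ {e ∈ T | v₀ ∈ e}, f e = 2 := by
    have h : {e ∈ T | v₀ ∈ e} = {s(v₀, u₁), s(v₀, u₂)} := by
      ext e
      simp only [hT, Finset.mem_filter, Finset.mem_insert, Finset.mem_singleton]
      constructor
      · rintro ⟨rfl | rfl | rfl, hm⟩
        · exact Or.inl rfl
        · exact Or.inr rfl
        · exfalso
          rw [Sym2.mem_iff] at hm
          rcases hm with h | h
          exacts [hne1 h, hne2 h]
      · rintro (rfl | rfl)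
        · exact ⟨Or.inl rfl, Sym2.mem_mk_left _ _⟩
        · exact ⟨Or.inr (Or.inl rfl), Sym2.mem_mk_left _ _⟩
    rw [h, Finset.sum_insert (by simp [he12]), Finset.sum_singleton, hf1, hf2]
    norm_num
  have hc1 : ∑ e ∈ {e ∈ T | u₁ ∈ e}, f e = 0 := by
    have h : {e ∈ T | u₁ ∈ e} = {s(v₀, u₁), s(u₁, u₂)} := by
      ext e
      simp only [hT, Finset.mem_filter, Finset.mem_insert, Finset.mem_singleton]
      constructor
      · rintro ⟨rfl | rfl | rfl, hm⟩
        · exact Or.inl rfl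
        · exfalso
          rw [Sym2.mem_iff] at hm
          rcases hm with h | h
          exacts [hne1 h.symm, hu h]
        · exact Or.inr rfl
      · rintro (rfl | rfl)
        · exact ⟨Or.inl rfl, Sym2.mem_mk_right _ _⟩
        · exact ⟨Or.inr (Or.inr rfl), Sym2.mem_mk_left _ _⟩
    rw [h, Finset.sum_insert (by simp [he13]), Finset.sum_singleton, hf1, hf3]
    ring
  have hc2 : ∑ e ∈ {e ∈ T | u₂ ∈ e}, f e = 0 := by
    have h : {e ∈ T | u₂ ∈ e} = {s(v₀, u₂), s(u₁, u₂)} := by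
      ext e
      simp only [hT, Finset.mem_filter, Finset.mem_insert, Finset.mem_singleton]
      constructor
      · rintro ⟨rfl | rfl | rfl, hm⟩
        · exfalso
          rw [Sym2.mem_iff] at hm
          rcases hm with h | h
          exacts [hne2 h.symm, hu h.symm]
        · exact Or.inl rfl
        · exact Or.inr rfl
      · rintro (rfl | rfl)
        · exact ⟨Or.inr (Or.inl rfl), Sym2.mem_mk_right _ _⟩
        · exact ⟨Or.inr (Or.inr rfl), Sym2.mem_mk_right _ _⟩
    rw [h, Finset.sum_insert (by simp [he23]), Finset.sum_singleton, hf2, hf3]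
    ring
  have hcother : ∀ v, v ≠ v₀ → v ≠ u₁ → v ≠ u₂ → ∑ e ∈ {e ∈ T | v ∈ e}, f e = 0 := by
    intro v h0 h1 h2
    have h : {e ∈ T | v ∈ e} = ∅ := by
      rw [Finset.filter_eq_empty_iff]
      intro e he
      simp only [hT, Finset.mem_insert, Finset.mem_singleton] at he
      rcases he with rfl | rfl | rfl <;> simp [Sym2.mem_iff, h0, h1, h2]
    rw [h, Finset.sum_empty]
  have hcnn : ∀ v, 0 ≤ ∑ e ∈ {e ∈ T | v ∈ e}, f e := by
    intro v
    rcases eq_or_ne v v₀ with rfl | h0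
    · rw [hc0]; norm_num
    rcases eq_or_ne v u₁ with rfl | h1
    · rw [hc1]
    rcases eq_or_ne v u₂ with rfl | h2
    · rw [hc2]
    · rw [hcother v h0 h1 h2]
  have hge : ∀ v, vweight G' g v ≤ vweight G f v := by
    intro v
    rw [hw v]
    linarith [hcnn v]
  have hwnn : ∀ v, 0 ≤ vweight G f v := fun v => le_trans (hg2 v) (hge v)
  have hwv0 : vweight G f v₀ = vweight G' g v₀ + 2 := by rw [hw v₀, hc0]
  refine ⟨⟨?_, hwnn, ?_⟩, ?_⟩
  · -- values in {1, -1}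
    intro e he
    rw [hsplit, Finset.mem_union] at he
    rcases he with he | he
    · rw [hf0 e he]; exact hg1 e he
    · simp only [hT, Finset.mem_insert, Finset.mem_singleton] at he
      rcases he with rfl | rfl | rfl
      · exact Or.inl hf1
      · exact Or.inl hf2
      · exact Or.inr hf3
  · -- positive edge condition
    intro a b hab hfab
    rcases eq_or_ne a v₀ with h | ha0
    · rw [h] at hab ⊢
      rcases (hnb b).1 hab with h' | h'
      · rw [h', hwv0]; linarith [hg2 v₀, hwnn u₁]
      · rw [h', hwv0]; linarith [hg2 v₀, hwnn u₂]
    rcases eq_or_ne b v₀ with h | hb0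
    · rw [h] at hab ⊢
      rcases (hnb a).1 hab.symm with h' | h'
      · rw [h', hwv0]; linarith [hg2 v₀, hwnn u₁]
      · rw [h', hwv0]; linarith [hg2 v₀, hwnn u₂]
    rcases eq_or_ne s(a, b) s(u₁, u₂) with he | he
    · exfalso
      rw [he, hf3] at hfab
      norm_num at hfab
    · have hab' : G'.Adj a b := (hG' a b).2 ⟨hab, he, ha0, hb0⟩
      have hgab : g s(a, b) = 1 := by
        rw [← hf0 _ ((hmem' _).2 ⟨(SimpleGraph.mem_edgeFinset).2 hab, he, ?_⟩)]
        · exact hfab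
        · rw [Sym2.mem_iff]
          push_neg
          exact ⟨fun h => ha0 h.symm, fun h => hb0 h.symm⟩
      have := hg3 hab' hgab
      linarith [hge a, hge b]
  · -- the sum
    rw [hsplit, Finset.sum_union hdisj,
      Finset.sum_congr rfl fun e he => hf0 e he]
    have : ∑ e ∈ T, f e = 1 := by
      rw [hT, Finset.sum_insert (by simp [he12, he13]),
        Finset.sum_insert (by simp [he23]), Finset.sum_singleton, hf1, hf2, hf3]
      ring
    rw [this]
end

section
/- Let G be a simple graph with a vertex v₀ of degree 2 whose neighbours u₁, u₂ are not adjacent in G. Let G' = G + u₁u₂ - v₀ (add the edge u₁u₂ and delete v₀). If g ∈ SEDF⁰(G'), then the function f on E(G) defined by f(e) = g(e) for e ∈ E(G') \ {u₁u₂}, f(u₁v₀) = 1, and f(u₂v₀) = g(u₁u₂), belongs to SEDF⁰(G) and satisfies f(G) = g(G') + 1. -/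
open Finset

open scoped Classical

/-- `v₀` has degree 2 with non-adjacent neighbours `u₁ u₂`;
extending `g ∈ SEDF⁰(G + u₁u₂ - v₀)` by `f(u₁v₀) = 1`, `f(u₂v₀) = g(u₁u₂)`
gives `f ∈ SEDF⁰(G)` with `f(G) = g(G') + 1`. -/
theorem stmt3 {V : Type*} [Fintype V] [DecidableEq V]
    (G G' : SimpleGraph V) (v₀ u₁ u₂ : V) (hu : u₁ ≠ u₂)
    (hnbr : G.neighborFinset v₀ = {u₁, u₂})
    (hnadj : ¬ G.Adj u₁ u₂)
    (hG' : ∀ a b, G'.Adj a b ↔ (G.Adj a b ∨ s(a, b) = s(u₁, u₂)) ∧ a ≠ v₀ ∧ b ≠ v₀)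
    (g f : Sym2 V → ℤ) (hg : IsSEDF0 G' g)
    (hf0 : ∀ e ∈ G'.edgeFinset, e ≠ s(u₁, u₂) → f e = g e)
    (hf1 : f s(u₁, v₀) = 1) (hf2 : f s(u₂, v₀) = g s(u₁, u₂)) :
    IsSEDF0 G f ∧
      ∑ e ∈ G.edgeFinset, f e = (∑ e ∈ G'.edgeFinset, g e) + 1 := by
  classical
  obtain ⟨hg1, hg2, hg3⟩ := hg
  have hadj1 : G.Adj v₀ u₁ := by
    rw [← SimpleGraph.mem_neighborFinset, hnbr]; simp
  have hadj2 : G.Adj v₀ u₂ := by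
    rw [← SimpleGraph.mem_neighborFinset, hnbr]; simp
  have hG'12 : G'.Adj u₁ u₂ := (hG' u₁ u₂).mpr ⟨Or.inr rfl, hadj1.ne', hadj2.ne'⟩
  have he₀ : s(u₁, u₂) ∈ G'.edgeFinset := SimpleGraph.mem_edgeFinset.mpr hG'12
  have hnbrmem : ∀ w, G.Adj v₀ w → w = u₁ ∨ w = u₂ := by
    intro w h
    have := (SimpleGraph.mem_neighborFinset G v₀ w).mpr h
    rw [hnbr] at this; simpa using this
  have hnotv₀ : ∀ e ∈ G'.edgeFinset, v₀ ∉ e := by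
    intro e
    induction e with
    | _ a b =>
      intro he
      rw [SimpleGraph.mem_edgeFinset, SimpleGraph.mem_edgeSet, hG'] at he
      simp only [Sym2.mem_iff]
      push_neg
      exact ⟨fun h => he.2.1 h.symm, fun h => he.2.2 h.symm⟩
  have hE : G.edgeFinset
      = insert s(u₁, v₀) (insert s(u₂, v₀) (G'.edgeFinset.erase s(u₁, u₂))) := by
    ext e
    induction e with
    | _ a b =>
      simp only [Finset.mem_insert, Finset.mem_erase, SimpleGraph.mem_edgeFinset,
        SimpleGraph.mem_edgeSet, hG']
      constructor
      · intro hab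
        by_cases ha : a = v₀
        · subst ha
          rcases hnbrmem b hab with rfl | rfl
          · exact Or.inl (Sym2.eq_swap)
          · exact Or.inr (Or.inl Sym2.eq_swap)
        by_cases hb : b = v₀
        · subst hb
          rcases hnbrmem a hab.symm with rfl | rfl
          · exact Or.inl rfl
          · exact Or.inr (Or.inl rfl)
        · refine Or.inr (Or.inr ⟨?_, Or.inl hab, ha, hb⟩)
          intro h
          exact hnadj (G.mem_edgeSet.mp (h ▸ G.mem_edgeSet.mpr hab))
      · rintro (h | h | ⟨hne, hab | h, ha, hb⟩)
        · exact G.mem_edgeSet.mp (h ▸ G.mem_edgeSet.mpr hadj1.symm)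
        · exact G.mem_edgeSet.mp (h ▸ G.mem_edgeSet.mpr hadj2.symm)
        · exact hab
        · exact absurd h hne
  have huv1 : s(u₁, v₀) ≠ s(u₂, v₀) := by
    simp [Sym2.eq_iff, hu, hadj1.ne', hadj2.ne']
  have hEnot2 : s(u₂, v₀) ∉ G'.edgeFinset.erase s(u₁, u₂) := by
    intro h
    exact hnotv₀ _ (Finset.mem_of_mem_erase h) (by simp)
  have hEnot1 : s(u₁, v₀) ∉ insert s(u₂, v₀) (G'.edgeFinset.erase s(u₁, u₂)) := by
    intro h
    rcases Finset.mem_insert.mp h with h | h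
    · exact huv1 h
    · exact hnotv₀ _ (Finset.mem_of_mem_erase h) (by simp)
  have vw : ∀ (H : SimpleGraph V) (h : Sym2 V → ℤ) (v : V),
      vweight H h v = ∑ e ∈ H.edgeFinset, if v ∈ e then h e else 0 := by
    intro H h v
    rw [vweight, SimpleGraph.incidenceFinset_eq_filter, Finset.sum_filter]
  have hcongr : ∀ v : V, ∑ e ∈ G'.edgeFinset.erase s(u₁, u₂), (if v ∈ e then f e else 0)
      = ∑ e ∈ G'.edgeFinset.erase s(u₁, u₂), (if v ∈ e then g e else 0) :=
    fun v => Finset.sum_congr rfl fun e he => by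
      rw [hf0 e (Finset.mem_of_mem_erase he) (Finset.ne_of_mem_erase he)]
  have key : ∀ v, vweight G f v
      = (if v ∈ s(u₁, v₀) then (1 : ℤ) else 0)
        + (if v ∈ s(u₂, v₀) then g s(u₁, u₂) else 0)
        + (vweight G' g v - (if v ∈ s(u₁, u₂) then g s(u₁, u₂) else 0)) := by
    intro v
    rw [vw G f v, hE, Finset.sum_insert hEnot1, Finset.sum_insert hEnot2, hf1, hf2,
      hcongr v, Finset.sum_erase_eq_sub he₀, ← vw G' g v]
    ring
  have wv0' : vweight G' g v₀ = 0 := by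
    rw [vw]
    exact Finset.sum_eq_zero fun e he => if_neg (hnotv₀ e he)
  have w0 : vweight G f v₀ = 1 + g s(u₁, u₂) := by
    rw [key, wv0']
    simp [Sym2.mem_iff, hadj1.ne, hadj2.ne]
  have w1 : vweight G f u₁ = 1 + (vweight G' g u₁ - g s(u₁, u₂)) := by
    rw [key]
    simp [Sym2.mem_iff, hu, hadj1.ne']
  have w2 : vweight G f u₂ = vweight G' g u₂ := by
    rw [key]
    have h2 : u₂ ≠ u₁ := hu.symm
    simp only [Sym2.mem_iff, h2, hadj2.ne', or_self, or_true, true_or,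
      if_true, or_false, false_or, if_false]
    ring
  have wother : ∀ v, v ≠ u₁ → v ≠ u₂ → v ≠ v₀ → vweight G f v = vweight G' g v := by
    intro v h1 h2 h0
    rw [key]
    simp [Sym2.mem_iff, h1, h2, h0]
  have ge₀ : g s(u₁, u₂) = 1 ∨ g s(u₁, u₂) = -1 := hg1 _ he₀
  have ge₀le : g s(u₁, u₂) ≤ 1 := by rcases ge₀ with h | h <;> rw [h] <;> norm_num
  have mono : ∀ v, v ≠ v₀ → vweight G' g v ≤ vweight G f v := by
    intro v hv
    by_cases h1 : v = u₁
    · subst h1; rw [w1]; linarith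
    by_cases h2 : v = u₂
    · subst h2; rw [w2]
    · rw [wother v h1 h2 hv]
  refine ⟨⟨?_, ?_, ?_⟩, ?_⟩
  · -- values in {1, -1}
    intro e he
    rw [hE] at he
    rcases Finset.mem_insert.mp he with rfl | he
    · exact Or.inl hf1
    rcases Finset.mem_insert.mp he with rfl | he
    · rw [hf2]; exact hg1 _ he₀
    · rw [hf0 e (Finset.mem_of_mem_erase he) (Finset.ne_of_mem_erase he)]
      exact hg1 _ (Finset.mem_of_mem_erase he)
  · -- nonneg weights
    intro v
    by_cases hv : v = v₀
    · subst hv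
      rcases ge₀ with h | h <;> rw [w0, h] <;> norm_num
    · exact le_trans (hg2 v) (mono v hv)
  · -- positive edges
    intro x y hxy hfxy
    by_cases hx : x = v₀
    · subst hx
      rcases hnbrmem y hxy with h | h
      · rw [h, w0, w1]; linarith [hg2 u₁]
      · rw [h] at hfxy ⊢
        rw [Sym2.eq_swap, hf2] at hfxy
        rw [w0, w2, hfxy]; linarith [hg2 u₂]
    by_cases hy : y = v₀
    · subst hy
      rcases hnbrmem x hxy.symm with h | h
      · rw [h, w0, w1]; linarith [hg2 u₁]
      · rw [h] at hfxy ⊢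
        rw [hf2] at hfxy
        rw [w0, w2, hfxy]; linarith [hg2 u₂]
    · have hG'xy : G'.Adj x y := (hG' x y).mpr ⟨Or.inl hxy, hx, hy⟩
      have hne : s(x, y) ≠ s(u₁, u₂) := by
        intro h
        exact hnadj (G.mem_edgeSet.mp (h ▸ G.mem_edgeSet.mpr hxy))
      have hgxy : g s(x, y) = 1 := by
        rw [← hf0 _ (SimpleGraph.mem_edgeFinset.mpr hG'xy) hne]; exact hfxy
      exact le_trans (hg3 hG'xy hgxy) (add_le_add (mono x hx) (mono y hy))
  · -- sum
    rw [hE, Finset.sum_insert hEnot1, Finset.sum_insert hEnot2, hf1, hf2,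
      Finset.sum_congr rfl (fun e he => hf0 e (Finset.mem_of_mem_erase he)
        (Finset.ne_of_mem_erase he)),
      Finset.sum_erase_eq_sub he₀]
    ring
end

section
/- For any finite simple graph G of order n with at least one vertex of even degree, the signed edge domination number satisfies γ'ₛ(G) ≤ n - 2 + v_even(G), where v_even(G) is the number of vertices of even degree. -/
set_option linter.unusedSectionVars false
set_option linter.unusedVariables false
set_option linter.unusedTactic false
set_option maxHeartbeats 1000000


open Finset

open scoped Classical

section SEDFwork
variable {V : Type*} [Fintype V] [DecidableEq V]



/-- degree of `v` in an abstract edge set `A`. -/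
noncomputable def edeg (A : Finset (Sym2 V)) (v : V) : ℕ :=
  (A.filter (fun e => v ∈ e)).card

/-- cap for the negative-subgraph degree. -/
def cap (d : ℕ) : ℕ := (d - 1) / 2

lemma edeg_mono {N A : Finset (Sym2 V)} (h : N ⊆ A) (v : V) : edeg N v ≤ edeg A v :=
  card_le_card (filter_subset_filter _ h)

lemma cap_mono {a b : ℕ} (h : a ≤ b) : cap a ≤ cap b :=
  Nat.div_le_div_right (Nat.sub_le_sub_right h 1)

lemma two_cap_le {d : ℕ} (hd : 1 ≤ d) : 2 * cap d ≤ d - 1 := by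
  rw [mul_comm]; exact Nat.div_mul_le_self _ _

lemma cap_odd {d : ℕ} (h : Odd d) : 2 * cap d + 1 = d := by
  obtain ⟨k, rfl⟩ := h
  simp [cap, Nat.add_sub_cancel]

lemma cap_even {d : ℕ} (h : Even d) (h0 : d ≠ 0) : 2 * cap d + 2 = d := by
  obtain ⟨k, rfl⟩ := h
  have hk : 1 ≤ k := by omega
  have : k + k - 1 = 2 * (k - 1) + 1 := by omega
  simp only [cap, this]
  omega

lemma cap_succ_le {d : ℕ} (h : Odd d) (h3 : 3 ≤ d) : cap (d - 1) + 1 ≤ cap d := by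
  have h1 := cap_odd h
  have h2 : Even (d - 1) := by rcases h with ⟨k, rfl⟩; exact ⟨k, by omega⟩
  have h20 : d - 1 ≠ 0 := by omega
  have := cap_even h2 h20
  omega

lemma cap_sub2_le {d : ℕ} (h3 : 3 ≤ d) : cap (d - 2) + 1 ≤ cap d := by
  rcases Nat.even_or_odd d with he | ho
  · have h1 := cap_even he (by omega)
    have h2 : Even (d - 2) := by rcases he with ⟨k, rfl⟩; exact ⟨k - 1, by omega⟩
    have := cap_even h2 (by omega)
    omega
  · have h1 := cap_odd ho
    have h2 : Odd (d - 2) := by rcases ho with ⟨k, rfl⟩; exact ⟨k - 1, by omega⟩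
    have := cap_odd h2
    omega

/-- number of odd-degree vertices -/
noncomputable def oc (A : Finset (Sym2 V)) : ℕ :=
  (univ.filter fun v => Odd (edeg A v)).card

/-- number of even-degree non-isolated vertices -/
noncomputable def wc (A : Finset (Sym2 V)) : ℕ :=
  (univ.filter fun v => Even (edeg A v) ∧ edeg A v ≠ 0).card

/-- the target -/
noncomputable def TT (A : Finset (Sym2 V)) : ℤ :=
  if A = ∅ then 0
  else (A.card : ℤ) - oc A - 2 * wc A + 2 - (if wc A = 0 then 1 else 0)

lemma count_shift (p q : V → Prop) (S : Finset V)
    (h : ∀ v ∉ S, (p v ↔ q v)) :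
    ((univ.filter q).card : ℤ) =
      (univ.filter p).card + ((S.filter q).card - (S.filter p).card) := by
  have key : ∀ r : V → Prop, (univ.filter r).card = (S.filter r).card + ((univ \ S).filter r).card := by
    intro r
    rw [← card_union_of_disjoint, ← filter_union, union_sdiff_of_subset (subset_univ S)]
    exact disjoint_filter_filter (disjoint_sdiff)
  rw [key q, key p]
  have : (univ \ S).filter q = (univ \ S).filter p := by
    apply filter_congr
    intro v hv
    simp only [mem_sdiff] at hv
    simp [h v hv.2]
  rw [this]; push_cast; ring

lemma edeg_sdiff {A S : Finset (Sym2 V)} (h : S ⊆ A) (v : V) :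
    edeg (A \ S) v = edeg A v - edeg S v := by
  unfold edeg
  have : (A \ S).filter (fun e => v ∈ e) = A.filter (fun e => v ∈ e) \ S.filter (fun e => v ∈ e) := by
    ext e; simp only [mem_filter, mem_sdiff]; tauto
  rw [this]
  exact card_sdiff_of_subset (filter_subset_filter _ h)

lemma edeg_pair (e₁ e₂ : Sym2 V) (hne : e₁ ≠ e₂) (w : V) :
    edeg ({e₁, e₂} : Finset (Sym2 V)) w =
      (if w ∈ e₁ then 1 else 0) + (if w ∈ e₂ then 1 else 0) := by
  unfold edeg
  rw [filter_insert, filter_singleton]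
  by_cases h1 : w ∈ e₁ <;> by_cases h2 : w ∈ e₂ <;>
    simp [h1, h2, card_insert_of_notMem, hne]

lemma edeg_singleton (e : Sym2 V) (w : V) :
    edeg ({e} : Finset (Sym2 V)) w = if w ∈ e then 1 else 0 := by
  unfold edeg
  rw [filter_singleton]
  split <;> simp

/-- neighbors: degree equals number of neighbors. -/
lemma edeg_eq_card_nbrs (A : Finset (Sym2 V)) (hd : ∀ e ∈ A, ¬ e.IsDiag) (v : V) :
    edeg A v = (univ.filter fun x => s(v, x) ∈ A).card := by
  unfold edeg
  apply card_bij (fun e he => Sym2.Mem.other (mem_filter.mp he).2)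
  · intro e he
    have h2 := (mem_filter.mp he).2
    have h1 := (mem_filter.mp he).1
    simp only [mem_filter, mem_univ, true_and]
    rw [Sym2.other_spec h2]
    exact h1
  · intro e₁ he₁ e₂ he₂ hsame
    have := Sym2.other_spec (mem_filter.mp he₁).2
    rw [hsame] at this
    rw [← this, Sym2.other_spec (mem_filter.mp he₂).2]
  · intro x hx
    have hx' := (mem_filter.mp hx).2
    have hmem : v ∈ s(v, x) := Sym2.mem_mk_left _ _
    refine ⟨s(v, x), mem_filter.mpr ⟨hx', hmem⟩, ?_⟩
    have := Sym2.other_spec (mem_filter.mp (mem_filter.mpr ⟨hx', hmem⟩ : s(v,x) ∈ A.filter (fun e => v ∈ e))).2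
    exact Sym2.congr_right.mp this

def Good (A : Finset (Sym2 V)) : Prop :=
  ∃ N, N ⊆ A ∧ (∀ v, edeg N v ≤ cap (edeg A v)) ∧ TT A ≤ 2 * N.card


lemma move {A S K : Finset (Sym2 V)} (hS : S ⊆ A) (hK : K ⊆ S)
    (room : ∀ v, edeg K v + cap (edeg (A \ S) v) ≤ cap (edeg A v))
    (hGood : Good (A \ S))
    (hT : TT A ≤ TT (A \ S) + 2 * K.card) : Good A := by
  obtain ⟨N, hN, hcap, hTT⟩ := hGood
  have hdisj : Disjoint N K :=
    Finset.disjoint_left.mpr fun e heN heK =>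
      (Finset.mem_sdiff.mp (hN heN)).2 (hK heK)
  refine ⟨N ∪ K, ?_, ?_, ?_⟩
  · exact union_subset (hN.trans sdiff_subset) (hK.trans hS)
  · intro v
    have he : edeg (N ∪ K) v = edeg N v + edeg K v := by
      unfold edeg
      rw [filter_union, card_union_of_disjoint (disjoint_filter_filter hdisj)]
    rw [he]
    have := hcap v
    have := room v
    omega
  · have hcard : (N ∪ K).card = N.card + K.card := card_union_of_disjoint hdisj
    rw [hcard]; push_cast; linarith

lemma room_zero {A S : Finset (Sym2 V)} :
    ∀ v, edeg (∅ : Finset (Sym2 V)) v + cap (edeg (A \ S) v) ≤ cap (edeg A v) := by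
  intro v
  have h0 : edeg (∅ : Finset (Sym2 V)) v = 0 := by simp [edeg]
  rw [h0, zero_add]
  exact cap_mono (edeg_mono sdiff_subset v)

lemma room_one {A S : Finset (Sym2 V)} {a b : V}
    (ha : cap (edeg (A \ S) a) < cap (edeg A a))
    (hb : cap (edeg (A \ S) b) < cap (edeg A b)) :
    ∀ v, edeg ({s(a,b)} : Finset (Sym2 V)) v + cap (edeg (A \ S) v) ≤ cap (edeg A v) := by
  intro v
  have h1 : edeg ({s(a,b)} : Finset (Sym2 V)) v = if v ∈ s(a,b) then 1 else 0 := by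
    unfold edeg; rw [filter_singleton]; split <;> simp
  rw [h1]
  by_cases hv : v ∈ s(a,b)
  · rw [if_pos hv]
    rcases Sym2.mem_iff.mp hv with rfl | rfl
    · omega
    · omega
  · rw [if_neg hv, zero_add]
    exact cap_mono (edeg_mono sdiff_subset v)

lemma oc_empty : oc (∅ : Finset (Sym2 V)) = 0 := by simp [oc, edeg]
lemma wc_empty : wc (∅ : Finset (Sym2 V)) = 0 := by simp [wc, edeg]


lemma edeg_pos {A : Finset (Sym2 V)} {a : V} {e : Sym2 V} (he : e ∈ A) (ha : a ∈ e) :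
    1 ≤ edeg A a := by
  have : e ∈ A.filter (fun e => a ∈ e) := mem_filter.mpr ⟨he, ha⟩
  exact card_pos.mpr ⟨e, this⟩

lemma edeg_two {A : Finset (Sym2 V)} {a : V} {e₁ e₂ : Sym2 V} (h1 : e₁ ∈ A) (h2 : e₂ ∈ A)
    (hne : e₁ ≠ e₂) (ha1 : a ∈ e₁) (ha2 : a ∈ e₂) : 2 ≤ edeg A a := by
  have hsub : ({e₁, e₂} : Finset (Sym2 V)) ⊆ A.filter (fun e => a ∈ e) := by
    intro e he
    rcases mem_insert.mp he with rfl | he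
    · exact mem_filter.mpr ⟨h1, ha1⟩
    · rw [mem_singleton.mp he]; exact mem_filter.mpr ⟨h2, ha2⟩
  calc 2 = ({e₁, e₂} : Finset (Sym2 V)).card := (card_pair hne).symm
    _ ≤ _ := card_le_card hsub
  
lemma sym2_ne_of_ne {c p q : V} (hpq : p ≠ q) : s(c,p) ≠ s(c,q) := fun h => hpq (Sym2.congr_right.mp h)

/-- Shape A: delete two edges sharing center c. -/
lemma shapeA {A : Finset (Sym2 V)} {c p q : V}
    (hcp : c ≠ p) (hcq : c ≠ q) (hpq : p ≠ q)
    (h1 : s(c,p) ∈ A) (h2 : s(c,q) ∈ A) :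
    ({s(c,p), s(c,q)} : Finset (Sym2 V)) ⊆ A ∧
    edeg (A \ {s(c,p), s(c,q)}) c = edeg A c - 2 ∧
    edeg (A \ {s(c,p), s(c,q)}) p = edeg A p - 1 ∧
    edeg (A \ {s(c,p), s(c,q)}) q = edeg A q - 1 ∧
    (∀ x, x ≠ c → x ≠ p → x ≠ q → edeg (A \ {s(c,p), s(c,q)}) x = edeg A x) ∧
    (A \ {s(c,p), s(c,q)}).card + 2 = A.card := by
  have hne : s(c,p) ≠ s(c,q) := sym2_ne_of_ne hpq
  have hsub : ({s(c,p), s(c,q)} : Finset (Sym2 V)) ⊆ A := by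
    intro e he; rcases mem_insert.mp he with rfl | he
    · exact h1
    · rw [mem_singleton.mp he]; exact h2
  have hd : ∀ w, edeg ({s(c,p), s(c,q)} : Finset (Sym2 V)) w =
      (if w ∈ s(c,p) then 1 else 0) + (if w ∈ s(c,q) then 1 else 0) := edeg_pair _ _ hne
  refine ⟨hsub, ?_, ?_, ?_, ?_, ?_⟩
  · rw [edeg_sdiff hsub, hd]
    simp [Sym2.mem_iff]
  · rw [edeg_sdiff hsub, hd]
    simp [Sym2.mem_iff, hcp.symm, hpq]
  · rw [edeg_sdiff hsub, hd]
    simp [Sym2.mem_iff, hcq.symm, hpq.symm]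
  · intro x hxc hxp hxq
    rw [edeg_sdiff hsub, hd]
    simp [Sym2.mem_iff, hxc, hxp, hxq]
  · rw [card_sdiff_of_subset hsub, card_pair hne]
    have : 2 ≤ A.card := by
      calc 2 = ({s(c,p), s(c,q)} : Finset (Sym2 V)).card := (card_pair hne).symm
        _ ≤ _ := card_le_card hsub
    omega

/-- Shape B : delete one edge. -/
lemma shapeB {A : Finset (Sym2 V)} {a b : V} (hab : a ≠ b) (h1 : s(a,b) ∈ A) :
    ({s(a,b)} : Finset (Sym2 V)) ⊆ A ∧
    edeg (A \ {s(a,b)}) a = edeg A a - 1 ∧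
    edeg (A \ {s(a,b)}) b = edeg A b - 1 ∧
    (∀ x, x ≠ a → x ≠ b → edeg (A \ {s(a,b)}) x = edeg A x) ∧
    (A \ {s(a,b)}).card + 1 = A.card := by
  have hsub : ({s(a,b)} : Finset (Sym2 V)) ⊆ A := singleton_subset_iff.mpr h1
  refine ⟨hsub, ?_, ?_, ?_, ?_⟩
  · rw [edeg_sdiff hsub, edeg_singleton]; simp [Sym2.mem_iff]
  · rw [edeg_sdiff hsub, edeg_singleton]; simp [Sym2.mem_iff]
  · intro x hxa hxb
    rw [edeg_sdiff hsub, edeg_singleton]; simp [Sym2.mem_iff, hxa, hxb]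
  · rw [card_sdiff_of_subset hsub, card_singleton]
    have : 1 ≤ A.card := card_pos.mpr ⟨_, h1⟩
    omega

/-- Shape C : delete two disjoint edges. -/
lemma shapeC {A : Finset (Sym2 V)} {a b z y : V}
    (hab : a ≠ b) (hzy : z ≠ y) (haz : a ≠ z) (hay : a ≠ y) (hbz : b ≠ z) (hby : b ≠ y)
    (h1 : s(a,b) ∈ A) (h2 : s(z,y) ∈ A) :
    ({s(a,b), s(z,y)} : Finset (Sym2 V)) ⊆ A ∧
    edeg (A \ {s(a,b), s(z,y)}) a = edeg A a - 1 ∧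
    edeg (A \ {s(a,b), s(z,y)}) b = edeg A b - 1 ∧
    edeg (A \ {s(a,b), s(z,y)}) z = edeg A z - 1 ∧
    edeg (A \ {s(a,b), s(z,y)}) y = edeg A y - 1 ∧
    (∀ x, x ≠ a → x ≠ b → x ≠ z → x ≠ y → edeg (A \ {s(a,b), s(z,y)}) x = edeg A x) ∧
    (A \ {s(a,b), s(z,y)}).card + 2 = A.card := by
  have hne : s(a,b) ≠ s(z,y) := by
    intro h
    have : a ∈ s(z,y) := h ▸ Sym2.mem_mk_left a b
    rcases Sym2.mem_iff.mp this with h' | h'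
    · exact haz h'
    · exact hay h'
  have hsub : ({s(a,b), s(z,y)} : Finset (Sym2 V)) ⊆ A := by
    intro e he; rcases mem_insert.mp he with rfl | he
    · exact h1
    · rw [mem_singleton.mp he]; exact h2
  have hd := edeg_pair (s(a,b)) (s(z,y)) hne
  refine ⟨hsub, ?_, ?_, ?_, ?_, ?_, ?_⟩
  · rw [edeg_sdiff hsub, hd]; simp [Sym2.mem_iff, haz, hay]
  · rw [edeg_sdiff hsub, hd]; simp [Sym2.mem_iff, hbz, hby]
  · rw [edeg_sdiff hsub, hd]; simp [Sym2.mem_iff, haz.symm, hbz.symm]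
  · rw [edeg_sdiff hsub, hd]; simp [Sym2.mem_iff, hay.symm, hby.symm]
  · intro x h1' h2' h3' h4'
    rw [edeg_sdiff hsub, hd]; simp [Sym2.mem_iff, h1', h2', h3', h4']
  · rw [card_sdiff_of_subset hsub, card_pair hne]
    have : 2 ≤ A.card := by
      calc 2 = ({s(a,b), s(z,y)} : Finset (Sym2 V)).card := (card_pair hne).symm
        _ ≤ _ := card_le_card hsub
    omega

/-- counting helper -/
lemma count_diff (f g : V → ℕ) (p : ℕ → Prop) [DecidablePred p] (D : Finset V)
    (h : ∀ v ∉ D, f v = g v) :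
    ((univ.filter fun v => p (g v)).card : ℤ) =
      (univ.filter fun v => p (f v)).card +
        ∑ v ∈ D, ((if p (g v) then (1:ℤ) else 0) - (if p (f v) then 1 else 0)) := by
  have key : ∀ r : V → ℕ, ((univ.filter fun v => p (r v)).card : ℤ) =
      ∑ v ∈ D, (if p (r v) then (1:ℤ) else 0) +
      ((univ \ D).filter fun v => p (r v)).card := by
    intro r
    have : (univ.filter fun v => p (r v)).card =
        (D.filter fun v => p (r v)).card + ((univ \ D).filter fun v => p (r v)).card := by
      rw [← card_union_of_disjoint (disjoint_filter_filter disjoint_sdiff), ← filter_union,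
        union_sdiff_of_subset (subset_univ D)]
    rw [this]
    push_cast
    congr 1
    rw [card_filter]
    push_cast
    rfl
  rw [key f, key g]
  have heq : ((univ \ D).filter fun v => p (g v)) = ((univ \ D).filter fun v => p (f v)) := by
    apply filter_congr
    intro v hv
    rw [h v (mem_sdiff.mp hv).2]
  rw [heq]
  rw [Finset.sum_sub_distrib]
  ring


-- χ-term helpers (ℤ-valued indicator differences)
lemma chio_sub2 {n : ℕ} {i1 : Decidable (Odd (n-2))} {i2 : Decidable (Odd n)} (h : 2 ≤ n) :
    ((if Odd (n-2) then (1:ℤ) else 0) - (if Odd n then 1 else 0)) = 0 := by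
  split_ifs with h1 h2 <;> simp only [Nat.odd_iff] at * <;> omega

lemma chio_sub1_odd {n : ℕ} {i1 : Decidable (Odd (n-1))} {i2 : Decidable (Odd n)} (h : Odd n) :
    ((if Odd (n-1) then (1:ℤ) else 0) - (if Odd n then 1 else 0)) = -1 := by
  split_ifs with h1 h2 <;> simp only [Nat.odd_iff] at * <;> omega

lemma chio_sub1_even {n : ℕ} {i1 : Decidable (Odd (n-1))} {i2 : Decidable (Odd n)} (h : Even n) (h0 : n ≠ 0) :
    ((if Odd (n-1) then (1:ℤ) else 0) - (if Odd n then 1 else 0)) = 1 := by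
  split_ifs with h1 h2 <;> simp only [Nat.odd_iff, Nat.even_iff] at * <;> omega

lemma chiw_sub2 {n : ℕ} {i1 : Decidable (Even (n-2) ∧ n-2 ≠ 0)} {i2 : Decidable (Even n ∧ n ≠ 0)} (h : 3 ≤ n) :
    ((if Even (n-2) ∧ n-2 ≠ 0 then (1:ℤ) else 0) - (if Even n ∧ n ≠ 0 then 1 else 0)) = 0 := by
  split_ifs with h1 h2 <;>
    simp only [Nat.even_iff, ne_eq, not_and_or, not_not] at * <;> omega

lemma chiw_sub2_two {n : ℕ} {i1 : Decidable (Even (n-2) ∧ n-2 ≠ 0)} {i2 : Decidable (Even n ∧ n ≠ 0)} (h : n = 2) :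
    ((if Even (n-2) ∧ n-2 ≠ 0 then (1:ℤ) else 0) - (if Even n ∧ n ≠ 0 then 1 else 0)) = -1 := by
  subst h; norm_num

lemma chiw_sub1_odd3 {n : ℕ} {i1 : Decidable (Even (n-1) ∧ n-1 ≠ 0)} {i2 : Decidable (Even n ∧ n ≠ 0)} (h : Odd n) (h3 : 3 ≤ n) :
    ((if Even (n-1) ∧ n-1 ≠ 0 then (1:ℤ) else 0) - (if Even n ∧ n ≠ 0 then 1 else 0)) = 1 := by
  split_ifs with h1 h2 <;>
    simp only [Nat.even_iff, Nat.odd_iff, ne_eq, not_and_or, not_not] at * <;> omega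

lemma chiw_sub1_odd1 {n : ℕ} {i1 : Decidable (Even (n-1) ∧ n-1 ≠ 0)} {i2 : Decidable (Even n ∧ n ≠ 0)} (h : n = 1) :
    ((if Even (n-1) ∧ n-1 ≠ 0 then (1:ℤ) else 0) - (if Even n ∧ n ≠ 0 then 1 else 0)) = 0 := by
  subst h; norm_num

lemma chiw_sub1_even {n : ℕ} {i1 : Decidable (Even (n-1) ∧ n-1 ≠ 0)} {i2 : Decidable (Even n ∧ n ≠ 0)} (h : Even n) (h0 : n ≠ 0) :
    ((if Even (n-1) ∧ n-1 ≠ 0 then (1:ℤ) else 0) - (if Even n ∧ n ≠ 0 then 1 else 0)) = -1 := by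
  split_ifs with h1 h2 <;>
    simp only [Nat.even_iff, Nat.odd_iff, ne_eq, not_and_or, not_not] at * <;> omega

end SEDFwork

section Moves
variable {V : Type*} [Fintype V] [DecidableEq V]

lemma ne_empty_of_edeg {B : Finset (Sym2 V)} {w : V} (h : 1 ≤ edeg B w) : B ≠ ∅ := by
  intro hB
  rw [hB] at h
  simp [edeg] at h

/-- M5: odd-odd edge uv (deg ≥3) where u has an even neighbor x; delete uv,ux, add back uv. -/
lemma moveM5 {A : Finset (Sym2 V)} {u v x : V}
    (huv : u ≠ v) (hux : u ≠ x) (hvx : v ≠ x)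
    (h1 : s(u,v) ∈ A) (h2 : s(u,x) ∈ A)
    (hu : Odd (edeg A u)) (hu3 : 3 ≤ edeg A u)
    (hv : Odd (edeg A v)) (hv3 : 3 ≤ edeg A v)
    (hx : Even (edeg A x)) (hx0 : edeg A x ≠ 0)
    (hGood : Good (A \ ({s(u,v), s(u,x)} : Finset (Sym2 V)))) : Good A := by
  obtain ⟨hsub, hdu, hdv, hdx, hoth, hcard⟩ := shapeA huv hux hvx h1 h2
  set A' := A \ ({s(u,v), s(u,x)} : Finset (Sym2 V)) with hA'def
  have hagree : ∀ w, w ∉ ({u,v,x} : Finset V) → edeg A w = edeg A' w := by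
    intro w hw
    simp only [mem_insert, mem_singleton] at hw
    push_neg at hw
    exact (hoth w hw.1 hw.2.1 hw.2.2).symm
  have hoc := count_diff (edeg A) (edeg A') Odd {u,v,x} hagree
  have hwc := count_diff (edeg A) (edeg A') (fun n => Even n ∧ n ≠ 0) {u,v,x} hagree
  have hm1 : u ∉ ({v,x} : Finset V) := by simp [huv, hux]
  have hm2 : v ∉ ({x} : Finset V) := by simp [hvx]
  rw [sum_insert hm1, sum_insert hm2, sum_singleton, hdu, hdv, hdx] at hoc hwc
  simp only [chio_sub2 (show 2 ≤ edeg A u by omega), chio_sub1_odd hv, chio_sub1_even hx hx0] at hoc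
  simp only [chiw_sub2 hu3, chiw_sub1_odd3 hv hv3, chiw_sub1_even hx hx0] at hwc
  have Hoc : (oc A' : ℤ) = oc A := by unfold oc; rw [hoc]; ring
  have Hwc : (wc A' : ℤ) = wc A := by unfold wc; rw [hwc]; ring
  have hAne : A ≠ ∅ := ne_empty_of_mem h1
  have hA'ne : A' ≠ ∅ := ne_empty_of_edeg (w := u) (by omega)
  apply move (S := ({s(u,v), s(u,x)} : Finset (Sym2 V))) (K := {s(u,v)}) hsub
    (by simp) ?_ hGood ?_
  · apply room_one
    · rw [← hA'def, hdu]
      have := cap_sub2_le hu3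
      omega
    · rw [← hA'def, hdv]
      have := cap_succ_le hv hv3
      omega
  · rw [card_singleton, ← hA'def]
    unfold TT
    rw [if_neg hAne, if_neg hA'ne]
    split_ifs <;> push_cast <;> omega


lemma oc_two {A : Finset (Sym2 V)} {a b : V} (ha : Odd (edeg A a)) (hb : Odd (edeg A b))
    (hab : a ≠ b) : 2 ≤ oc A := by
  have : 1 < oc A := one_lt_card.mpr
    ⟨a, mem_filter.mpr ⟨mem_univ _, ha⟩, b, mem_filter.mpr ⟨mem_univ _, hb⟩, hab⟩
  omega

lemma wc_one {A : Finset (Sym2 V)} {z : V} (h1 : Even (edeg A z)) (h2 : edeg A z ≠ 0) :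
    1 ≤ wc A :=
  card_pos.mpr ⟨z, mem_filter.mpr ⟨mem_univ _, h1, h2⟩⟩

lemma wc_two {A : Finset (Sym2 V)} {z y : V} (h1 : Even (edeg A z)) (h2 : edeg A z ≠ 0)
    (h3 : Even (edeg A y)) (h4 : edeg A y ≠ 0) (hzy : z ≠ y) : 2 ≤ wc A := by
  have : 1 < wc A := one_lt_card.mpr
    ⟨z, mem_filter.mpr ⟨mem_univ _, h1, h2⟩, y, mem_filter.mpr ⟨mem_univ _, h3, h4⟩, hzy⟩
  omega

lemma wc_three {A : Finset (Sym2 V)} {z y x : V} (h1 : Even (edeg A z)) (h2 : edeg A z ≠ 0)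
    (h3 : Even (edeg A y)) (h4 : edeg A y ≠ 0) (h5 : Even (edeg A x)) (h6 : edeg A x ≠ 0)
    (hzy : z ≠ y) (hzx : z ≠ x) (hyx : y ≠ x) : 3 ≤ wc A := by
  have : 2 < wc A := two_lt_card.mpr
    ⟨z, mem_filter.mpr ⟨mem_univ _, h1, h2⟩, y, mem_filter.mpr ⟨mem_univ _, h3, h4⟩,
     x, mem_filter.mpr ⟨mem_univ _, h5, h6⟩, hzy, hzx, hyx⟩
  omega

lemma good_empty_N {A : Finset (Sym2 V)} (h : TT A ≤ 0) : Good A := by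
  refine ⟨∅, empty_subset _, fun v => ?_, by simpa using h⟩
  simp [edeg]

/-- M1 : isolated edge -/
lemma moveM1 {A : Finset (Sym2 V)} {a b : V} (hab : a ≠ b)
    (h1 : s(a,b) ∈ A) (hda : edeg A a = 1) (hdb : edeg A b = 1)
    (hGood : Good (A \ ({s(a,b)} : Finset (Sym2 V)))) : Good A := by
  obtain ⟨hsub, hda', hdb', hoth, hcard⟩ := shapeB hab h1
  set A' := A \ ({s(a,b)} : Finset (Sym2 V)) with hA'def
  have hoa : Odd (edeg A a) := by rw [hda]; exact odd_one
  have hob : Odd (edeg A b) := by rw [hdb]; exact odd_one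
  by_cases hA'0 : A' = ∅
  · apply good_empty_N
    have hoc2 := oc_two hoa hob hab
    have hc1 : A.card = 1 := by rw [← hcard, hA'0]; simp
    unfold TT
    rw [if_neg (ne_empty_of_mem h1)]
    split_ifs <;> push_cast <;> omega
  · have hagree : ∀ w, w ∉ ({a,b} : Finset V) → edeg A w = edeg A' w := by
      intro w hw
      simp only [mem_insert, mem_singleton] at hw
      push_neg at hw
      exact (hoth w hw.1 hw.2).symm
    have hoc := count_diff (edeg A) (edeg A') Odd {a,b} hagree
    have hwc := count_diff (edeg A) (edeg A') (fun n => Even n ∧ n ≠ 0) {a,b} hagree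
    have hm1 : a ∉ ({b} : Finset V) := by simp [hab]
    rw [sum_insert hm1, sum_singleton, hda', hdb'] at hoc hwc
    simp only [chio_sub1_odd hoa, chio_sub1_odd hob] at hoc
    simp only [chiw_sub1_odd1 hda, chiw_sub1_odd1 hdb] at hwc
    have Hoc : (oc A' : ℤ) = oc A - 2 := by unfold oc; rw [hoc]; ring
    have Hwc : (wc A' : ℤ) = wc A := by unfold wc; rw [hwc]; ring
    apply move (S := ({s(a,b)} : Finset (Sym2 V))) (K := ∅) hsub (empty_subset _)
      room_zero hGood ?_
    rw [card_empty, ← hA'def]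
    unfold TT
    rw [if_neg (ne_empty_of_mem h1), if_neg hA'0]
    split_ifs <;> push_cast <;> omega

/-- M2 : two pendants at common vertex -/
lemma moveM2 {A : Finset (Sym2 V)} {c p q : V}
    (hcp : c ≠ p) (hcq : c ≠ q) (hpq : p ≠ q)
    (h1 : s(c,p) ∈ A) (h2 : s(c,q) ∈ A)
    (hdp : edeg A p = 1) (hdq : edeg A q = 1) (hdc : 2 ≤ edeg A c)
    (hGood : Good (A \ ({s(c,p), s(c,q)} : Finset (Sym2 V)))) : Good A := by
  obtain ⟨hsub, hdc', hdp', hdq', hoth, hcard⟩ := shapeA hcp hcq hpq h1 h2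
  set A' := A \ ({s(c,p), s(c,q)} : Finset (Sym2 V)) with hA'def
  have hop : Odd (edeg A p) := by rw [hdp]; exact odd_one
  have hoq : Odd (edeg A q) := by rw [hdq]; exact odd_one
  have hagree : ∀ w, w ∉ ({c,p,q} : Finset V) → edeg A w = edeg A' w := by
    intro w hw
    simp only [mem_insert, mem_singleton] at hw
    push_neg at hw
    exact (hoth w hw.1 hw.2.1 hw.2.2).symm
  have hoc := count_diff (edeg A) (edeg A') Odd {c,p,q} hagree
  have hwc := count_diff (edeg A) (edeg A') (fun n => Even n ∧ n ≠ 0) {c,p,q} hagree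
  have hm1 : c ∉ ({p,q} : Finset V) := by simp [hcp, hcq]
  have hm2 : p ∉ ({q} : Finset V) := by simp [hpq]
  rw [sum_insert hm1, sum_insert hm2, sum_singleton, hdc', hdp', hdq'] at hoc hwc
  simp only [chio_sub2 hdc, chio_sub1_odd hop, chio_sub1_odd hoq] at hoc
  simp only [chiw_sub1_odd1 hdp, chiw_sub1_odd1 hdq] at hwc
  have Hoc : (oc A' : ℤ) = oc A - 2 := by unfold oc; rw [hoc]; ring
  rcases Nat.lt_or_ge (edeg A c) 3 with hc2 | hc3
  · -- edeg A c = 2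
    have hdc2 : edeg A c = 2 := by omega
    simp only [chiw_sub2_two hdc2] at hwc
    have Hwc : (wc A' : ℤ) = wc A - 1 := by unfold wc; rw [hwc]; ring
    have hec : Even (edeg A c) := by rw [hdc2]; decide
    have hwc1 := wc_one hec (by omega)
    by_cases hA'0 : A' = ∅
    · apply good_empty_N
      have hoc2 := oc_two hop hoq hpq
      have hc1 : A.card = 2 := by rw [← hcard, hA'0]; simp
      unfold TT
      rw [if_neg (ne_empty_of_mem h1)]
      split_ifs <;> push_cast <;> omega
    · apply move (S := ({s(c,p), s(c,q)} : Finset (Sym2 V))) (K := ∅) hsub (empty_subset _)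
        room_zero hGood ?_
      rw [card_empty, ← hA'def]
      unfold TT
      rw [if_neg (ne_empty_of_mem h1), if_neg hA'0]
      split_ifs <;> push_cast <;> omega
  · simp only [chiw_sub2 hc3] at hwc
    have Hwc : (wc A' : ℤ) = wc A := by unfold wc; rw [hwc]; ring
    have hA'ne : A' ≠ ∅ := ne_empty_of_edeg (w := c) (by omega)
    apply move (S := ({s(c,p), s(c,q)} : Finset (Sym2 V))) (K := ∅) hsub (empty_subset _)
      room_zero hGood ?_
    rw [card_empty, ← hA'def]
    unfold TT
    rw [if_neg (ne_empty_of_mem h1), if_neg hA'ne]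
    split_ifs <;> push_cast <;> omega

/-- M3 : pendant attached to an even vertex -/
lemma moveM3 {A : Finset (Sym2 V)} {z y : V} (hzy : z ≠ y)
    (h1 : s(z,y) ∈ A) (hz : Even (edeg A z)) (hz0 : edeg A z ≠ 0) (hdy : edeg A y = 1)
    (hGood : Good (A \ ({s(z,y)} : Finset (Sym2 V)))) : Good A := by
  obtain ⟨hsub, hdz', hdy', hoth, hcard⟩ := shapeB hzy h1
  set A' := A \ ({s(z,y)} : Finset (Sym2 V)) with hA'def
  have hoy : Odd (edeg A y) := by rw [hdy]; exact odd_one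
  have hz2 : 2 ≤ edeg A z := by
    rcases hz with ⟨k, hk⟩; omega
  have hagree : ∀ w, w ∉ ({z,y} : Finset V) → edeg A w = edeg A' w := by
    intro w hw
    simp only [mem_insert, mem_singleton] at hw
    push_neg at hw
    exact (hoth w hw.1 hw.2).symm
  have hoc := count_diff (edeg A) (edeg A') Odd {z,y} hagree
  have hwc := count_diff (edeg A) (edeg A') (fun n => Even n ∧ n ≠ 0) {z,y} hagree
  have hm1 : z ∉ ({y} : Finset V) := by simp [hzy]
  rw [sum_insert hm1, sum_singleton, hdz', hdy'] at hoc hwc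
  simp only [chio_sub1_even hz hz0, chio_sub1_odd hoy] at hoc
  simp only [chiw_sub1_even hz hz0, chiw_sub1_odd1 hdy] at hwc
  have Hoc : (oc A' : ℤ) = oc A := by unfold oc; rw [hoc]; ring
  have Hwc : (wc A' : ℤ) = wc A - 1 := by unfold wc; rw [hwc]; ring
  have hwc1 := wc_one hz hz0
  have hA'ne : A' ≠ ∅ := ne_empty_of_edeg (w := z) (by omega)
  apply move (S := ({s(z,y)} : Finset (Sym2 V))) (K := ∅) hsub (empty_subset _)
    room_zero hGood ?_
  rw [card_empty, ← hA'def]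
  unfold TT
  rw [if_neg (ne_empty_of_mem h1), if_neg hA'ne]
  split_ifs <;> push_cast <;> omega


/-- M4a : pendant u at odd v (deg ≥3) which has an odd (≥3) neighbor x; delete uv,vx, add vx -/
lemma moveM4a {A : Finset (Sym2 V)} {u v x : V}
    (hvu : v ≠ u) (hvx : v ≠ x) (hux : u ≠ x)
    (h1 : s(v,u) ∈ A) (h2 : s(v,x) ∈ A)
    (hdu : edeg A u = 1) (hv : Odd (edeg A v)) (hv3 : 3 ≤ edeg A v)
    (hx : Odd (edeg A x)) (hx3 : 3 ≤ edeg A x)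
    (hGood : Good (A \ ({s(v,u), s(v,x)} : Finset (Sym2 V)))) : Good A := by
  obtain ⟨hsub, hdv', hdu', hdx', hoth, hcard⟩ := shapeA hvu hvx hux h1 h2
  set A' := A \ ({s(v,u), s(v,x)} : Finset (Sym2 V)) with hA'def
  have hou : Odd (edeg A u) := by rw [hdu]; exact odd_one
  have hagree : ∀ w, w ∉ ({v,u,x} : Finset V) → edeg A w = edeg A' w := by
    intro w hw
    simp only [mem_insert, mem_singleton] at hw
    push_neg at hw
    exact (hoth w hw.1 hw.2.1 hw.2.2).symm
  have hoc := count_diff (edeg A) (edeg A') Odd {v,u,x} hagree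
  have hwc := count_diff (edeg A) (edeg A') (fun n => Even n ∧ n ≠ 0) {v,u,x} hagree
  have hm1 : v ∉ ({u,x} : Finset V) := by simp [hvu, hvx]
  have hm2 : u ∉ ({x} : Finset V) := by simp [hux]
  rw [sum_insert hm1, sum_insert hm2, sum_singleton, hdv', hdu', hdx'] at hoc hwc
  simp only [chio_sub2 (show 2 ≤ edeg A v by omega), chio_sub1_odd hou, chio_sub1_odd hx] at hoc
  simp only [chiw_sub2 hv3, chiw_sub1_odd1 hdu, chiw_sub1_odd3 hx hx3] at hwc
  have Hoc : (oc A' : ℤ) = oc A - 2 := by unfold oc; rw [hoc]; ring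
  have Hwc : (wc A' : ℤ) = wc A + 1 := by unfold wc; rw [hwc]; ring
  have hA'ne : A' ≠ ∅ := ne_empty_of_edeg (w := v) (by omega)
  apply move (S := ({s(v,u), s(v,x)} : Finset (Sym2 V))) (K := {s(v,x)}) hsub
    (by simp) ?_ hGood ?_
  · apply room_one
    · rw [← hA'def, hdv']
      have := cap_sub2_le hv3
      omega
    · rw [← hA'def, hdx']
      have := cap_succ_le hx hx3
      omega
  · rw [card_singleton, ← hA'def]
    unfold TT
    rw [if_neg (ne_empty_of_mem h1), if_neg hA'ne]
    split_ifs <;> push_cast <;> omega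

/-- M4b : pendant u at odd v (deg ≥3) with even neighbor w, plus another even vertex w' -/
lemma moveM4b {A : Finset (Sym2 V)} {u v w w' : V}
    (hvu : v ≠ u) (hvw : v ≠ w) (huw : u ≠ w)
    (h1 : s(v,u) ∈ A) (h2 : s(v,w) ∈ A)
    (hdu : edeg A u = 1) (hv : Odd (edeg A v)) (hv3 : 3 ≤ edeg A v)
    (hw : Even (edeg A w)) (hw0 : edeg A w ≠ 0)
    (hw' : Even (edeg A w')) (hw'0 : edeg A w' ≠ 0) (hww' : w ≠ w')
    (hGood : Good (A \ ({s(v,u), s(v,w)} : Finset (Sym2 V)))) : Good A := by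
  obtain ⟨hsub, hdv', hdu', hdw', hoth, hcard⟩ := shapeA hvu hvw huw h1 h2
  set A' := A \ ({s(v,u), s(v,w)} : Finset (Sym2 V)) with hA'def
  have hou : Odd (edeg A u) := by rw [hdu]; exact odd_one
  have hagree : ∀ x, x ∉ ({v,u,w} : Finset V) → edeg A x = edeg A' x := by
    intro x hx
    simp only [mem_insert, mem_singleton] at hx
    push_neg at hx
    exact (hoth x hx.1 hx.2.1 hx.2.2).symm
  have hoc := count_diff (edeg A) (edeg A') Odd {v,u,w} hagree
  have hwc := count_diff (edeg A) (edeg A') (fun n => Even n ∧ n ≠ 0) {v,u,w} hagree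
  have hm1 : v ∉ ({u,w} : Finset V) := by simp [hvu, hvw]
  have hm2 : u ∉ ({w} : Finset V) := by simp [huw]
  rw [sum_insert hm1, sum_insert hm2, sum_singleton, hdv', hdu', hdw'] at hoc hwc
  simp only [chio_sub2 (show 2 ≤ edeg A v by omega), chio_sub1_odd hou,
    chio_sub1_even hw hw0] at hoc
  simp only [chiw_sub2 hv3, chiw_sub1_odd1 hdu, chiw_sub1_even hw hw0] at hwc
  have Hoc : (oc A' : ℤ) = oc A := by unfold oc; rw [hoc]; ring
  have Hwc : (wc A' : ℤ) = wc A - 1 := by unfold wc; rw [hwc]; ring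
  have hwc2 := wc_two hw hw0 hw' hw'0 hww'
  have hA'ne : A' ≠ ∅ := ne_empty_of_edeg (w := v) (by omega)
  apply move (S := ({s(v,u), s(v,w)} : Finset (Sym2 V))) (K := ∅) hsub (empty_subset _)
    room_zero hGood ?_
  rw [card_empty, ← hA'def]
  unfold TT
  rw [if_neg (ne_empty_of_mem h1), if_neg hA'ne]
  split_ifs <;> push_cast <;> omega

/-- M6 : odd-odd edge (deg ≥3) plus an even-even edge; delete both, add back uv -/
lemma moveM6 {A : Finset (Sym2 V)} {u v z y : V}
    (huv : u ≠ v) (hzy : z ≠ y) (huz : u ≠ z) (huy : u ≠ y) (hvz : v ≠ z) (hvy : v ≠ y)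
    (h1 : s(u,v) ∈ A) (h2 : s(z,y) ∈ A)
    (hu : Odd (edeg A u)) (hu3 : 3 ≤ edeg A u)
    (hv : Odd (edeg A v)) (hv3 : 3 ≤ edeg A v)
    (hz : Even (edeg A z)) (hz0 : edeg A z ≠ 0)
    (hy : Even (edeg A y)) (hy0 : edeg A y ≠ 0)
    (hGood : Good (A \ ({s(u,v), s(z,y)} : Finset (Sym2 V)))) : Good A := by
  obtain ⟨hsub, hdu', hdv', hdz', hdy', hoth, hcard⟩ := shapeC huv hzy huz huy hvz hvy h1 h2
  set A' := A \ ({s(u,v), s(z,y)} : Finset (Sym2 V)) with hA'def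
  have hagree : ∀ x, x ∉ ({u,v,z,y} : Finset V) → edeg A x = edeg A' x := by
    intro x hx
    simp only [mem_insert, mem_singleton] at hx
    push_neg at hx
    exact (hoth x hx.1 hx.2.1 hx.2.2.1 hx.2.2.2).symm
  have hoc := count_diff (edeg A) (edeg A') Odd {u,v,z,y} hagree
  have hwc := count_diff (edeg A) (edeg A') (fun n => Even n ∧ n ≠ 0) {u,v,z,y} hagree
  have hm1 : u ∉ ({v,z,y} : Finset V) := by simp [huv, huz, huy]
  have hm2 : v ∉ ({z,y} : Finset V) := by simp [hvz, hvy]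
  have hm3 : z ∉ ({y} : Finset V) := by simp [hzy]
  rw [sum_insert hm1, sum_insert hm2, sum_insert hm3, sum_singleton,
    hdu', hdv', hdz', hdy'] at hoc hwc
  simp only [chio_sub1_odd hu, chio_sub1_odd hv, chio_sub1_even hz hz0,
    chio_sub1_even hy hy0] at hoc
  simp only [chiw_sub1_odd3 hu hu3, chiw_sub1_odd3 hv hv3, chiw_sub1_even hz hz0,
    chiw_sub1_even hy hy0] at hwc
  have Hoc : (oc A' : ℤ) = oc A := by unfold oc; rw [hoc]; ring
  have Hwc : (wc A' : ℤ) = wc A := by unfold wc; rw [hwc]; ring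
  have hA'ne : A' ≠ ∅ := ne_empty_of_edeg (w := u) (by omega)
  apply move (S := ({s(u,v), s(z,y)} : Finset (Sym2 V))) (K := {s(u,v)}) hsub
    (by simp) ?_ hGood ?_
  · apply room_one
    · rw [← hA'def, hdu']
      have := cap_succ_le hu hu3
      omega
    · rw [← hA'def, hdv']
      have := cap_succ_le hv hv3
      omega
  · rw [card_singleton, ← hA'def]
    unfold TT
    rw [if_neg (ne_empty_of_mem h1), if_neg hA'ne]
    split_ifs <;> push_cast <;> omega

/-- M7 : odd-odd edge (deg ≥3), no even nonisolated vertices; delete uv, add back uv -/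
lemma moveM7 {A : Finset (Sym2 V)} {u v : V} (huv : u ≠ v)
    (h1 : s(u,v) ∈ A)
    (hu : Odd (edeg A u)) (hu3 : 3 ≤ edeg A u)
    (hv : Odd (edeg A v)) (hv3 : 3 ≤ edeg A v)
    (hwc0 : wc A = 0)
    (hGood : Good (A \ ({s(u,v)} : Finset (Sym2 V)))) : Good A := by
  obtain ⟨hsub, hdu', hdv', hoth, hcard⟩ := shapeB huv h1
  set A' := A \ ({s(u,v)} : Finset (Sym2 V)) with hA'def
  have hagree : ∀ x, x ∉ ({u,v} : Finset V) → edeg A x = edeg A' x := by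
    intro x hx
    simp only [mem_insert, mem_singleton] at hx
    push_neg at hx
    exact (hoth x hx.1 hx.2).symm
  have hoc := count_diff (edeg A) (edeg A') Odd {u,v} hagree
  have hwc := count_diff (edeg A) (edeg A') (fun n => Even n ∧ n ≠ 0) {u,v} hagree
  have hm1 : u ∉ ({v} : Finset V) := by simp [huv]
  rw [sum_insert hm1, sum_singleton, hdu', hdv'] at hoc hwc
  simp only [chio_sub1_odd hu, chio_sub1_odd hv] at hoc
  simp only [chiw_sub1_odd3 hu hu3, chiw_sub1_odd3 hv hv3] at hwc
  have Hoc : (oc A' : ℤ) = oc A - 2 := by unfold oc; rw [hoc]; ring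
  have Hwc : (wc A' : ℤ) = wc A + 2 := by unfold wc; rw [hwc]; ring
  have hA'ne : A' ≠ ∅ := ne_empty_of_edeg (w := u) (by omega)
  apply move (S := ({s(u,v)} : Finset (Sym2 V))) (K := {s(u,v)}) hsub
    (by simp) ?_ hGood ?_
  · apply room_one
    · rw [← hA'def, hdu']
      have := cap_succ_le hu hu3
      omega
    · rw [← hA'def, hdv']
      have := cap_succ_le hv hv3
      omega
  · rw [card_singleton, ← hA'def]
    unfold TT
    rw [if_neg (ne_empty_of_mem h1), if_neg hA'ne]
    split_ifs <;> push_cast <;> omega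

/-- M8 : odd y (deg ≥3) with even neighbors z,w and a third even vertex w'' -/
lemma moveM8 {A : Finset (Sym2 V)} {y z w w'' : V}
    (hyz : y ≠ z) (hyw : y ≠ w) (hzw : z ≠ w)
    (h1 : s(y,z) ∈ A) (h2 : s(y,w) ∈ A)
    (hy : Odd (edeg A y)) (hy3 : 3 ≤ edeg A y)
    (hz : Even (edeg A z)) (hz0 : edeg A z ≠ 0)
    (hw : Even (edeg A w)) (hw0 : edeg A w ≠ 0)
    (hw'' : Even (edeg A w'')) (hw''0 : edeg A w'' ≠ 0) (hzw'' : z ≠ w'') (hww'' : w ≠ w'')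
    (hGood : Good (A \ ({s(y,z), s(y,w)} : Finset (Sym2 V)))) : Good A := by
  obtain ⟨hsub, hdy', hdz', hdw', hoth, hcard⟩ := shapeA hyz hyw hzw h1 h2
  set A' := A \ ({s(y,z), s(y,w)} : Finset (Sym2 V)) with hA'def
  have hagree : ∀ x, x ∉ ({y,z,w} : Finset V) → edeg A x = edeg A' x := by
    intro x hx
    simp only [mem_insert, mem_singleton] at hx
    push_neg at hx
    exact (hoth x hx.1 hx.2.1 hx.2.2).symm
  have hoc := count_diff (edeg A) (edeg A') Odd {y,z,w} hagree
  have hwc := count_diff (edeg A) (edeg A') (fun n => Even n ∧ n ≠ 0) {y,z,w} hagree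
  have hm1 : y ∉ ({z,w} : Finset V) := by simp [hyz, hyw]
  have hm2 : z ∉ ({w} : Finset V) := by simp [hzw]
  rw [sum_insert hm1, sum_insert hm2, sum_singleton, hdy', hdz', hdw'] at hoc hwc
  simp only [chio_sub2 (show 2 ≤ edeg A y by omega), chio_sub1_even hz hz0,
    chio_sub1_even hw hw0] at hoc
  simp only [chiw_sub2 hy3, chiw_sub1_even hz hz0, chiw_sub1_even hw hw0] at hwc
  have Hoc : (oc A' : ℤ) = oc A + 2 := by unfold oc; rw [hoc]; ring
  have Hwc : (wc A' : ℤ) = wc A - 2 := by unfold wc; rw [hwc]; ring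
  have hwc3 := wc_three hz hz0 hw hw0 hw'' hw''0 hzw hzw'' hww''
  have hA'ne : A' ≠ ∅ := ne_empty_of_edeg (w := y) (by omega)
  apply move (S := ({s(y,z), s(y,w)} : Finset (Sym2 V))) (K := ∅) hsub (empty_subset _)
    room_zero hGood ?_
  rw [card_empty, ← hA'def]
  unfold TT
  rw [if_neg (ne_empty_of_mem h1), if_neg hA'ne]
  split_ifs <;> push_cast <;> omega

/-- M9a : even vertex v of degree ≥4 with even neighbors u,w -/
lemma moveM9a {A : Finset (Sym2 V)} {u v w : V}
    (hvu : v ≠ u) (hvw : v ≠ w) (huw : u ≠ w)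
    (h1 : s(v,u) ∈ A) (h2 : s(v,w) ∈ A)
    (hv : Even (edeg A v)) (hv4 : 4 ≤ edeg A v)
    (hu : Even (edeg A u)) (hu0 : edeg A u ≠ 0)
    (hw : Even (edeg A w)) (hw0 : edeg A w ≠ 0)
    (hGood : Good (A \ ({s(v,u), s(v,w)} : Finset (Sym2 V)))) : Good A := by
  obtain ⟨hsub, hdv', hdu', hdw', hoth, hcard⟩ := shapeA hvu hvw huw h1 h2
  set A' := A \ ({s(v,u), s(v,w)} : Finset (Sym2 V)) with hA'def
  have hagree : ∀ x, x ∉ ({v,u,w} : Finset V) → edeg A x = edeg A' x := by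
    intro x hx
    simp only [mem_insert, mem_singleton] at hx
    push_neg at hx
    exact (hoth x hx.1 hx.2.1 hx.2.2).symm
  have hoc := count_diff (edeg A) (edeg A') Odd {v,u,w} hagree
  have hwc := count_diff (edeg A) (edeg A') (fun n => Even n ∧ n ≠ 0) {v,u,w} hagree
  have hm1 : v ∉ ({u,w} : Finset V) := by simp [hvu, hvw]
  have hm2 : u ∉ ({w} : Finset V) := by simp [huw]
  rw [sum_insert hm1, sum_insert hm2, sum_singleton, hdv', hdu', hdw'] at hoc hwc
  simp only [chio_sub2 (show 2 ≤ edeg A v by omega), chio_sub1_even hu hu0,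
    chio_sub1_even hw hw0] at hoc
  simp only [chiw_sub2 (show 3 ≤ edeg A v by omega), chiw_sub1_even hu hu0,
    chiw_sub1_even hw hw0] at hwc
  have Hoc : (oc A' : ℤ) = oc A + 2 := by unfold oc; rw [hoc]; ring
  have Hwc : (wc A' : ℤ) = wc A - 2 := by unfold wc; rw [hwc]; ring
  have hwc3 := wc_three hu hu0 hv (by omega) hw hw0 hvu.symm huw hvw
  have hA'ne : A' ≠ ∅ := ne_empty_of_edeg (w := v) (by omega)
  apply move (S := ({s(v,u), s(v,w)} : Finset (Sym2 V))) (K := ∅) hsub (empty_subset _)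
    room_zero hGood ?_
  rw [card_empty, ← hA'def]
  unfold TT
  rw [if_neg (ne_empty_of_mem h1), if_neg hA'ne]
  split_ifs <;> push_cast <;> omega

/-- M9b : even vertex v of degree 2 with even neighbors u,w -/
lemma moveM9b {A : Finset (Sym2 V)} {u v w : V}
    (hvu : v ≠ u) (hvw : v ≠ w) (huw : u ≠ w)
    (h1 : s(v,u) ∈ A) (h2 : s(v,w) ∈ A)
    (hv2 : edeg A v = 2)
    (hu : Even (edeg A u)) (hu0 : edeg A u ≠ 0)
    (hw : Even (edeg A w)) (hw0 : edeg A w ≠ 0)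
    (hGood : Good (A \ ({s(v,u), s(v,w)} : Finset (Sym2 V)))) : Good A := by
  obtain ⟨hsub, hdv', hdu', hdw', hoth, hcard⟩ := shapeA hvu hvw huw h1 h2
  set A' := A \ ({s(v,u), s(v,w)} : Finset (Sym2 V)) with hA'def
  have hu2 : 2 ≤ edeg A u := by rcases hu with ⟨k, hk⟩; omega
  have hagree : ∀ x, x ∉ ({v,u,w} : Finset V) → edeg A x = edeg A' x := by
    intro x hx
    simp only [mem_insert, mem_singleton] at hx
    push_neg at hx
    exact (hoth x hx.1 hx.2.1 hx.2.2).symm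
  have hoc := count_diff (edeg A) (edeg A') Odd {v,u,w} hagree
  have hwc := count_diff (edeg A) (edeg A') (fun n => Even n ∧ n ≠ 0) {v,u,w} hagree
  have hm1 : v ∉ ({u,w} : Finset V) := by simp [hvu, hvw]
  have hm2 : u ∉ ({w} : Finset V) := by simp [huw]
  rw [sum_insert hm1, sum_insert hm2, sum_singleton, hdv', hdu', hdw'] at hoc hwc
  simp only [chio_sub2 (show 2 ≤ edeg A v by omega), chio_sub1_even hu hu0,
    chio_sub1_even hw hw0] at hoc
  simp only [chiw_sub2_two hv2, chiw_sub1_even hu hu0, chiw_sub1_even hw hw0] at hwc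
  have Hoc : (oc A' : ℤ) = oc A + 2 := by unfold oc; rw [hoc]; ring
  have Hwc : (wc A' : ℤ) = wc A - 3 := by unfold wc; rw [hwc]; ring
  have hev : Even (edeg A v) := by rw [hv2]; decide
  have hwc3 := wc_three hu hu0 hev (by omega) hw hw0 hvu.symm huw hvw
  have hA'ne : A' ≠ ∅ := ne_empty_of_edeg (w := u) (by omega)
  apply move (S := ({s(v,u), s(v,w)} : Finset (Sym2 V))) (K := ∅) hsub (empty_subset _)
    room_zero hGood ?_
  rw [card_empty, ← hA'def]
  unfold TT
  rw [if_neg (ne_empty_of_mem h1), if_neg hA'ne]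
  split_ifs <;> push_cast <;> omega

end Moves

section Dispatch
variable {V : Type*} [Fintype V] [DecidableEq V]

lemma exists_nbr {A : Finset (Sym2 V)} (hdiag : ∀ e ∈ A, ¬ e.IsDiag) {v : V}
    (h : 1 ≤ edeg A v) : ∃ b, b ≠ v ∧ s(v,b) ∈ A := by
  obtain ⟨e, he⟩ := card_pos.mp h
  have heA := (mem_filter.mp he).1
  have hve := (mem_filter.mp he).2
  refine ⟨Sym2.Mem.other hve, Sym2.other_ne (hdiag e heA) hve, ?_⟩
  rw [Sym2.other_spec hve]
  exact heA

lemma exists_nbr_ne {A : Finset (Sym2 V)} (hdiag : ∀ e ∈ A, ¬ e.IsDiag) {v : V}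
    (h : 2 ≤ edeg A v) (x : V) : ∃ b, b ≠ v ∧ b ≠ x ∧ s(v,b) ∈ A := by
  have hcard := edeg_eq_card_nbrs A hdiag v
  have h2 : 1 ≤ ((univ.filter fun b => s(v,b) ∈ A) \ {x}).card := by
    have := le_card_sdiff ({x} : Finset V) (univ.filter fun b => s(v,b) ∈ A)
    simp only [card_singleton] at this
    omega
  obtain ⟨b, hb⟩ := card_pos.mp h2
  rw [mem_sdiff, mem_filter, mem_singleton] at hb
  refine ⟨b, ?_, hb.2, hb.1.2⟩
  intro hbv
  subst hbv
  exact hdiag _ hb.1.2 (Sym2.isDiag_iff_proj_eq.mpr rfl)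

lemma exists_nbr_ne2 {A : Finset (Sym2 V)} (hdiag : ∀ e ∈ A, ¬ e.IsDiag) {v : V}
    (h : 3 ≤ edeg A v) (x₁ x₂ : V) : ∃ b, b ≠ v ∧ b ≠ x₁ ∧ b ≠ x₂ ∧ s(v,b) ∈ A := by
  have hcard := edeg_eq_card_nbrs A hdiag v
  have h2 : 1 ≤ ((univ.filter fun b => s(v,b) ∈ A) \ {x₁, x₂}).card := by
    have := le_card_sdiff ({x₁, x₂} : Finset V) (univ.filter fun b => s(v,b) ∈ A)
    have hle : ({x₁, x₂} : Finset V).card ≤ 2 := card_insert_le _ _ |>.trans (by simp)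
    omega
  obtain ⟨b, hb⟩ := card_pos.mp h2
  rw [mem_sdiff, mem_filter, mem_insert, mem_singleton] at hb
  push_neg at hb
  refine ⟨b, ?_, hb.2.1, hb.2.2, hb.1.2⟩
  intro hbv
  subst hbv
  exact hdiag _ hb.1.2 (Sym2.isDiag_iff_proj_eq.mpr rfl)

lemma odd_ne_zero {n : ℕ} (h : Odd n) : n ≠ 0 := by
  rcases h with ⟨k, rfl⟩; omega

theorem keyClaim : ∀ A : Finset (Sym2 V), (∀ e ∈ A, ¬ e.IsDiag) → Good A := by
  intro A
  induction A using Finset.strongInduction with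
  | _ A IH =>
  intro hdiag
  by_cases hA0 : A = ∅
  · apply good_empty_N
    unfold TT
    rw [if_pos hA0]
  have goodOf : ∀ S : Finset (Sym2 V), S ⊆ A → S.Nonempty → Good (A \ S) := by
    intro S hS hne
    exact IH _ (sdiff_ssubset hS hne) (fun e he => hdiag e (sdiff_subset he))

  have pairSub : ∀ e₁ e₂ : Sym2 V, e₁ ∈ A → e₂ ∈ A → ({e₁, e₂} : Finset (Sym2 V)) ⊆ A := by
    intro e₁ e₂ h1 h2
    rw [insert_subset_iff, singleton_subset_iff]
    exact ⟨h1, h2⟩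
  have odd3 : ∀ n : ℕ, Odd n → n ≠ 1 → 3 ≤ n := by
    rintro n ⟨k, rfl⟩ h; omega
  by_cases hC1 : ∃ a b, a ≠ b ∧ s(a,b) ∈ A ∧ edeg A a = 1 ∧ edeg A b = 1
  · obtain ⟨a, b, hab, he, hda, hdb⟩ := hC1
    exact moveM1 hab he hda hdb
      (goodOf _ (singleton_subset_iff.mpr he) (singleton_nonempty _))
  by_cases hC2 : ∃ c p q, c ≠ p ∧ c ≠ q ∧ p ≠ q ∧ s(c,p) ∈ A ∧ s(c,q) ∈ A ∧
      edeg A p = 1 ∧ edeg A q = 1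
  · obtain ⟨c, p, q, h1, h2, h3, h4, h5, h6, h7⟩ := hC2
    have hdc : 2 ≤ edeg A c := edeg_two h4 h5 (sym2_ne_of_ne h3)
      (Sym2.mem_mk_left _ _) (Sym2.mem_mk_left _ _)
    exact moveM2 h1 h2 h3 h4 h5 h6 h7 hdc
      (goodOf _ (pairSub _ _ h4 h5) (insert_nonempty _ _))
  by_cases hC3 : ∃ z y, z ≠ y ∧ s(z,y) ∈ A ∧ Even (edeg A z) ∧ edeg A y = 1
  · obtain ⟨z, y, h1, h2, h3, h4⟩ := hC3
    have hz0 : edeg A z ≠ 0 := by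
      have := edeg_pos h2 (Sym2.mem_mk_left _ _); omega
    exact moveM3 h1 h2 h3 hz0 h4
      (goodOf _ (singleton_subset_iff.mpr h2) (singleton_nonempty _))
  by_cases hC4 : ∃ p c, p ≠ c ∧ s(c,p) ∈ A ∧ edeg A p = 1 ∧ Odd (edeg A c)
  · obtain ⟨p, c, hpc, hedge, hdp, hodc⟩ := hC4
    push_neg at hC1
    have hdc3 : 3 ≤ edeg A c := by
      refine odd3 _ hodc (fun h1 => ?_)
      exact hC1 c p hpc.symm hedge h1 hdp
    by_cases hodd : ∃ x, x ≠ c ∧ x ≠ p ∧ s(c,x) ∈ A ∧ Odd (edeg A x)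
    · obtain ⟨x, hxc, hxp, hex, hox⟩ := hodd
      push_neg at hC2
      have hdx3 : 3 ≤ edeg A x := by
        refine odd3 _ hox (fun h1 => ?_)
        exact (hC2 c p x hpc.symm hxc.symm hxp.symm hedge hex hdp) h1
      exact moveM4a hpc.symm hxc.symm hxp.symm hedge hex hdp hodc hdc3 hox hdx3
        (goodOf _ (pairSub _ _ hedge hex) (insert_nonempty _ _))
    · push_neg at hodd
      obtain ⟨w, hwc, hwp, hew⟩ := exists_nbr_ne hdiag (by omega : 2 ≤ edeg A c) p
      have hEw : Even (edeg A w) := Nat.not_odd_iff_even.mp (hodd w hwc hwp hew)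
      obtain ⟨w₂, h2c, h2p, h2w, he2⟩ := exists_nbr_ne2 hdiag hdc3 p w
      have hEw₂ : Even (edeg A w₂) := Nat.not_odd_iff_even.mp (hodd w₂ h2c h2p he2)
      refine moveM4b hpc.symm hwc.symm hwp.symm hedge hew hdp hodc hdc3 hEw
        (by have := edeg_pos hew (Sym2.mem_mk_right _ _); omega) hEw₂
        (by have := edeg_pos he2 (Sym2.mem_mk_right _ _); omega) h2w.symm
        (goodOf _ (pairSub _ _ hedge hew) (insert_nonempty _ _))
  by_cases hOO : ∃ u v, u ≠ v ∧ s(u,v) ∈ A ∧ Odd (edeg A u) ∧ Odd (edeg A v)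
  · obtain ⟨u, v, huv, heuv, hou, hov⟩ := hOO
    push_neg at hC4
    have hdu3 : 3 ≤ edeg A u := by
      refine odd3 _ hou (fun h1 => ?_)
      exact hC4 u v huv (by rwa [Sym2.eq_swap] at heuv) h1 hov
    have hdv3 : 3 ≤ edeg A v := by
      refine odd3 _ hov (fun h1 => ?_)
      exact hC4 v u huv.symm heuv h1 hou
    by_cases hP1 : ∃ a b x, a ≠ b ∧ s(a,b) ∈ A ∧ Odd (edeg A a) ∧ Odd (edeg A b) ∧
        x ≠ a ∧ s(a,x) ∈ A ∧ Even (edeg A x)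
    · obtain ⟨a, b, x, hab, he1, hoa, hob, hxa, he2, hex⟩ := hP1
      have hda3 : 3 ≤ edeg A a := by
        refine odd3 _ hoa (fun h1 => ?_)
        exact hC4 a b hab (by rwa [Sym2.eq_swap] at he1) h1 hob
      have hdb3 : 3 ≤ edeg A b := by
        refine odd3 _ hob (fun h1 => ?_)
        exact hC4 b a hab.symm he1 h1 hoa
      refine moveM5 hab hxa.symm (fun h => ?_) he1 he2 hoa hda3 hob hdb3 hex
        (by have := edeg_pos he2 (Sym2.mem_mk_right _ _); omega)
        (goodOf _ (pairSub _ _ he1 he2) (insert_nonempty _ _))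
      · subst h; exact Nat.not_odd_iff_even.mpr hex hob
    · by_cases hP2 : ∃ z y, z ≠ y ∧ s(z,y) ∈ A ∧ Even (edeg A z) ∧ Even (edeg A y)
      · obtain ⟨z, y, hzy, he2, hez, hey⟩ := hP2
        have huz : u ≠ z := by rintro rfl; exact Nat.not_odd_iff_even.mpr hez hou
        have huy : u ≠ y := by rintro rfl; exact Nat.not_odd_iff_even.mpr hey hou
        have hvz : v ≠ z := by rintro rfl; exact Nat.not_odd_iff_even.mpr hez hov
        have hvy : v ≠ y := by rintro rfl; exact Nat.not_odd_iff_even.mpr hey hov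
        exact moveM6 huv hzy huz huy hvz hvy heuv he2 hou hdu3 hov hdv3
          hez (by have := edeg_pos he2 (Sym2.mem_mk_left _ _); omega)
          hey (by have := edeg_pos he2 (Sym2.mem_mk_right _ _); omega)
          (goodOf _ (pairSub _ _ heuv he2) (insert_nonempty _ _))
      · by_cases hwc0 : wc A = 0
        · exact moveM7 huv heuv hou hdu3 hov hdv3 hwc0
            (goodOf _ (singleton_subset_iff.mpr heuv) (singleton_nonempty _))
        · have hne : (univ.filter fun v => Even (edeg A v) ∧ edeg A v ≠ 0).Nonempty := by
            rw [← card_pos]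
            have : wc A ≠ 0 := hwc0
            unfold wc at this
            omega
          obtain ⟨z, hzmem⟩ := hne
          rw [mem_filter] at hzmem
          obtain ⟨-, hez, hz0⟩ := hzmem
          obtain ⟨y, hyz, hezy⟩ := exists_nbr (v := z) hdiag (show 1 ≤ edeg A z by omega)
          push_neg at hP2 hC3 hP1
          have hoy : Odd (edeg A y) := by
            rcases Nat.even_or_odd (edeg A y) with h | h
            · exact absurd h (hP2 z y hyz.symm hezy hez)
            · exact h
          have hdy1 : edeg A y ≠ 1 := hC3 z y hyz.symm hezy hez
          have hdy3 : 3 ≤ edeg A y := odd3 _ hoy hdy1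
          have heyz : s(y,z) ∈ A := by rwa [Sym2.eq_swap] at hezy
          obtain ⟨w, hwy, hwz, heyw⟩ := exists_nbr_ne hdiag (by omega : 2 ≤ edeg A y) z
          have hEw : Even (edeg A w) := by
            rcases Nat.even_or_odd (edeg A w) with h | h
            · exact h
            · exact absurd hez (hP1 y w z hwy.symm heyw hoy h hyz.symm heyz)
          obtain ⟨w₂, h2y, h2z, h2w, he2'⟩ := exists_nbr_ne2 hdiag hdy3 z w
          have hEw₂ : Even (edeg A w₂) := by
            rcases Nat.even_or_odd (edeg A w₂) with h | h
            · exact h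
            · exact absurd hez (hP1 y w₂ z h2y.symm he2' hoy h hyz.symm heyz)
          exact moveM8 hyz hwy.symm (fun h => hwz h.symm) heyz heyw hoy hdy3
            hez hz0 hEw (by have := edeg_pos heyw (Sym2.mem_mk_right _ _); omega)
            hEw₂ (by have := edeg_pos he2' (Sym2.mem_mk_right _ _); omega)
            h2z.symm h2w.symm
            (goodOf _ (pairSub _ _ heyz heyw) (insert_nonempty _ _))
  · by_cases hOddV : ∃ y, Odd (edeg A y)
    · obtain ⟨y, hoy⟩ := hOddV
      push_neg at hOO hC3
      have hdy1 : 1 ≤ edeg A y := by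
        have := odd_ne_zero hoy; omega
      obtain ⟨z, hzy, heyz'⟩ := exists_nbr (v := y) hdiag hdy1
      have hEz : Even (edeg A z) := by
        rcases Nat.even_or_odd (edeg A z) with h | h
        · exact h
        · exact absurd h (hOO y z hzy.symm heyz' hoy)
      have hezy : s(z,y) ∈ A := by rwa [Sym2.eq_swap] at heyz'
      have hdyne1 : edeg A y ≠ 1 := hC3 z y hzy hezy hEz
      have hdy3 : 3 ≤ edeg A y := odd3 _ hoy hdyne1
      obtain ⟨w, hwy, hwz, heyw⟩ := exists_nbr_ne hdiag (by omega : 2 ≤ edeg A y) z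
      have hEw : Even (edeg A w) := by
        rcases Nat.even_or_odd (edeg A w) with h | h
        · exact h
        · exact absurd h (hOO y w hwy.symm heyw hoy)
      obtain ⟨w₂, h2y, h2z, h2w, he2'⟩ := exists_nbr_ne2 hdiag hdy3 z w
      have hEw₂ : Even (edeg A w₂) := by
        rcases Nat.even_or_odd (edeg A w₂) with h | h
        · exact h
        · exact absurd h (hOO y w₂ h2y.symm he2' hoy)
      exact moveM8 hzy.symm hwy.symm (fun h => hwz h.symm) heyz' heyw hoy hdy3
        hEz (by have := edeg_pos hezy (Sym2.mem_mk_left _ _); omega)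
        hEw (by have := edeg_pos heyw (Sym2.mem_mk_right _ _); omega)
        hEw₂ (by have := edeg_pos he2' (Sym2.mem_mk_right _ _); omega)
        h2z.symm h2w.symm
        (goodOf _ (pairSub _ _ heyz' heyw) (insert_nonempty _ _))
    · push_neg at hOddV
      obtain ⟨e, he⟩ := nonempty_iff_ne_empty.mpr hA0
      induction e using Sym2.inductionOn with
      | hf a b =>
      have hab : a ≠ b := by
        intro h
        exact hdiag _ he (by rw [h]; exact Sym2.mk_isDiag_iff.mpr rfl)
      have hEa : Even (edeg A a) := Nat.not_odd_iff_even.mp (hOddV a)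
      have hEb : Even (edeg A b) := Nat.not_odd_iff_even.mp (hOddV b)
      have hda1 : 1 ≤ edeg A a := edeg_pos he (Sym2.mem_mk_left _ _)
      have hdb1 : 1 ≤ edeg A b := edeg_pos he (Sym2.mem_mk_right _ _)
      have hda2 : 2 ≤ edeg A a := by
        rcases hEa with ⟨k, hk⟩; omega
      obtain ⟨w, hwa, hwb, heaw⟩ := exists_nbr_ne hdiag hda2 b
      have hEw : Even (edeg A w) := Nat.not_odd_iff_even.mp (hOddV w)
      have hdw1 : 1 ≤ edeg A w := edeg_pos heaw (Sym2.mem_mk_right _ _)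
      rcases Nat.lt_or_ge (edeg A a) 4 with h4 | h4
      · have hda2' : edeg A a = 2 := by
          rcases hEa with ⟨k, hk⟩; omega
        exact moveM9b hab hwa.symm (fun h => hwb h.symm) he heaw hda2'
          hEb (by omega) hEw (by omega)
          (goodOf _ (pairSub _ _ he heaw) (insert_nonempty _ _))
      · exact moveM9a hab hwa.symm (fun h => hwb h.symm) he heaw hEa h4
          hEb (by omega) hEw (by omega)
          (goodOf _ (pairSub _ _ he heaw) (insert_nonempty _ _))


end Dispatch




/-- if `G` has at least one vertex of even degree, then
`γ'ₛ(G) ≤ n - 2 + v_even(G)`. -/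
theorem stmt5 {V : Type*} [Fintype V] [DecidableEq V] (G : SimpleGraph V)
    (h : 0 < (univ.filter fun v => Even (G.degree v)).card) :
    ∃ f : Sym2 V → ℤ, IsSEDF G f ∧
      ∑ e ∈ G.edgeFinset, f e ≤
        (Fintype.card V : ℤ) - 2 + (univ.filter fun v => Even (G.degree v)).card := by
  classical
  set A := G.edgeFinset with hA
  have hdiag : ∀ e ∈ A, ¬ e.IsDiag := fun e he => G.not_isDiag_of_mem_edgeFinset he
  obtain ⟨N, hNsub, hNcap, hNTT⟩ := keyClaim A hdiag
  set f : Sym2 V → ℤ := fun e => if e ∈ N then -1 else 1 with hf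
  have hdeg : ∀ v, edeg A v = G.degree v := by
    intro v
    rw [← G.card_incidenceFinset_eq_degree, G.incidenceFinset_eq_filter]
    rfl
  -- weight formula
  have hsumN : ∀ v, (N.filter (fun e => v ∈ e)).card = edeg N v := fun v => rfl
  have hvw : ∀ v, vweight G f v = (G.degree v : ℤ) - 2 * edeg N v := by
    intro v
    unfold vweight
    have hsplit : ∀ e ∈ G.incidenceFinset v, f e = 1 - 2 * (if e ∈ N then (1:ℤ) else 0) := by
      intro e he
      by_cases hmem : e ∈ N <;> simp [hf, hmem]
    rw [Finset.sum_congr rfl hsplit, Finset.sum_sub_distrib, Finset.sum_const,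
      ← Finset.mul_sum, Finset.sum_boole]
    have hfilt : (G.incidenceFinset v).filter (fun e => e ∈ N) = N.filter (fun e => v ∈ e) := by
      ext e
      rw [G.incidenceFinset_eq_filter]
      simp only [mem_filter]
      constructor
      · rintro ⟨⟨h1, h2⟩, h3⟩; exact ⟨h3, h2⟩
      · rintro ⟨h1, h2⟩; exact ⟨⟨hNsub h1, h2⟩, h1⟩
    rw [hfilt, hsumN, G.card_incidenceFinset_eq_degree]
    push_cast
    ring
  -- weights are ≥ 1 at non-isolated vertices
  have hw1 : ∀ v, 1 ≤ G.degree v → 1 ≤ vweight G f v := by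
    intro v hv
    rw [hvw]
    have hcap := hNcap v
    rw [hdeg] at hcap
    have h2 := two_cap_le (d := G.degree v) hv
    push_cast
    omega
  refine ⟨f, ⟨?_, ?_⟩, ?_⟩
  · intro e he
    by_cases hmem : e ∈ N <;> simp [hf, hmem]
  · intro u v huv
    have heA : s(u,v) ∈ A := by
      rw [hA, SimpleGraph.mem_edgeFinset]
      exact huv
    have hu1 : 1 ≤ G.degree u := by
      have := edeg_pos heA (Sym2.mem_mk_left u v); rwa [hdeg] at this
    have hv1 : 1 ≤ G.degree v := by
      have := edeg_pos heA (Sym2.mem_mk_right u v); rwa [hdeg] at this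
    have hfle : f s(u,v) ≤ 1 := by
      by_cases hmem : s(u,v) ∈ N <;> simp [hf, hmem]
    have := hw1 u hu1
    have := hw1 v hv1
    omega
  · -- the sum bound
    have hsum : ∑ e ∈ A, f e = (A.card : ℤ) - 2 * N.card := by
      have hsplit : ∀ e ∈ A, f e = 1 - 2 * (if e ∈ N then (1:ℤ) else 0) := by
        intro e he
        by_cases hmem : e ∈ N <;> simp [hf, hmem]
      rw [Finset.sum_congr rfl hsplit, Finset.sum_sub_distrib, Finset.sum_const,
        ← Finset.mul_sum, Finset.sum_boole]
      have : A.filter (fun e => e ∈ N) = N := by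
        ext e
        simp only [mem_filter]
        exact ⟨fun h => h.2, fun h => ⟨hNsub h, h⟩⟩
      rw [this]
      push_cast
      ring
    set veven := (univ.filter fun v => Even (G.degree v)).card with hveq
    have hocval : oc A + veven = Fintype.card V := by
      unfold oc
      rw [hveq]
      have h1 : (univ.filter fun v => Odd (edeg A v)) =
          (univ.filter fun v => ¬ Even (G.degree v)) := by
        apply filter_congr
        intro v _
        rw [hdeg v, ← Nat.not_even_iff_odd]
      rw [h1]
      have := Finset.card_filter_add_card_filter_not
        (s := (univ : Finset V)) (p := fun v => Even (G.degree v))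
      rw [← Finset.card_univ]
      omega
    have hwcle : wc A ≤ veven := by
      unfold wc
      rw [hveq]
      apply card_le_card
      intro v hv
      rw [mem_filter] at hv ⊢
      refine ⟨hv.1, ?_⟩
      rw [← hdeg v]
      exact hv.2.1
    have hvle : veven ≤ Fintype.card V := by
      rw [hveq, ← Finset.card_univ]
      exact card_le_card (filter_subset _ _)
    rw [hsum]
    unfold TT at hNTT
    by_cases hA0 : A = ∅
    · rw [if_pos hA0] at hNTT
      have : A.card = 0 := by rw [hA0]; simp
      have hN0 : N.card = 0 := by
        rw [card_eq_zero]
        rw [← subset_empty, ← hA0]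
        exact hNsub
      push_cast
      omega
    · rw [if_neg hA0] at hNTT
      split_ifs at hNTT <;> push_cast at * <;> omega
end

section
/- Let m ≤ n be positive integers, both even. Then the signed edge domination number of the complete bipartite graph K_{m,n} equals min{2m, n}. -/
open Finset

open scoped Classical

section helpers
variable {m n : ℕ}

lemma inc_inl (i : Fin m) :
    (completeBipartiteGraph (Fin m) (Fin n)).incidenceFinset (Sum.inl i)
      = Finset.univ.image (fun j : Fin n => s(Sum.inl i, Sum.inr j)) := by
  ext e
  induction e using Sym2.ind with
  | _ a b =>
    simp only [SimpleGraph.mem_incidenceFinset, SimpleGraph.incidenceSet, Set.mem_setOf_eq,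
      SimpleGraph.mem_edgeSet, Finset.mem_image, Finset.mem_univ, true_and, Sym2.mem_iff]
    constructor
    · rintro ⟨hadj, h | h⟩
      · subst h
        rcases b with b | b
        · simp at hadj
        · exact ⟨b, rfl⟩
      · subst h
        rcases a with a | a
        · simp at hadj
        · exact ⟨a, Sym2.eq_swap⟩
    · rintro ⟨j, hj⟩
      rw [Sym2.eq_iff] at hj
      rcases hj with ⟨h1, h2⟩ | ⟨h1, h2⟩ <;> subst h1 <;> subst h2 <;> simp

lemma inc_inr (j : Fin n) :
    (completeBipartiteGraph (Fin m) (Fin n)).incidenceFinset (Sum.inr j)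
      = Finset.univ.image (fun i : Fin m => s(Sum.inl i, Sum.inr j)) := by
  ext e
  induction e using Sym2.ind with
  | _ a b =>
    simp only [SimpleGraph.mem_incidenceFinset, SimpleGraph.incidenceSet, Set.mem_setOf_eq,
      SimpleGraph.mem_edgeSet, Finset.mem_image, Finset.mem_univ, true_and, Sym2.mem_iff]
    constructor
    · rintro ⟨hadj, h | h⟩
      · subst h
        rcases b with b | b
        · exact ⟨b, Sym2.eq_swap⟩
        · simp at hadj
      · subst h
        rcases a with a | a
        · exact ⟨a, rfl⟩
        · simp at hadj
    · rintro ⟨i, hi⟩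
      rw [Sym2.eq_iff] at hi
      rcases hi with ⟨h1, h2⟩ | ⟨h1, h2⟩ <;> subst h1 <;> subst h2 <;> simp

lemma edge_eq :
    (completeBipartiteGraph (Fin m) (Fin n)).edgeFinset
      = Finset.univ.image (fun p : Fin m × Fin n => s(Sum.inl p.1, Sum.inr p.2)) := by
  ext e
  induction e using Sym2.ind with
  | _ a b =>
    simp only [SimpleGraph.mem_edgeFinset, SimpleGraph.mem_edgeSet, Finset.mem_image,
      Finset.mem_univ, true_and]
    constructor
    · intro hadj
      rcases a with a | a <;> rcases b with b | b <;> simp at hadj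
      · exact ⟨(a, b), rfl⟩
      · exact ⟨(b, a), Sym2.eq_swap⟩
    · rintro ⟨⟨i, j⟩, hij⟩
      rw [Sym2.eq_iff] at hij
      rcases hij with ⟨h1, h2⟩ | ⟨h1, h2⟩ <;> subst h1 <;> subst h2 <;> simp

lemma vweight_inl (f : Sym2 (Fin m ⊕ Fin n) → ℤ) (i : Fin m) :
    vweight (completeBipartiteGraph (Fin m) (Fin n)) f (Sum.inl i)
      = ∑ j : Fin n, f s(Sum.inl i, Sum.inr j) := by
  rw [vweight, inc_inl, Finset.sum_image]
  intro a _ b _ h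
  simpa using (Sym2.congr_right).mp h

lemma vweight_inr (f : Sym2 (Fin m ⊕ Fin n) → ℤ) (j : Fin n) :
    vweight (completeBipartiteGraph (Fin m) (Fin n)) f (Sum.inr j)
      = ∑ i : Fin m, f s(Sum.inl i, Sum.inr j) := by
  rw [vweight, inc_inr, Finset.sum_image]
  intro a _ b _ h
  simpa using (Sym2.congr_left).mp h

lemma total_eq (f : Sym2 (Fin m ⊕ Fin n) → ℤ) :
    ∑ e ∈ (completeBipartiteGraph (Fin m) (Fin n)).edgeFinset, f e
      = ∑ i : Fin m, ∑ j : Fin n, f s(Sum.inl i, Sum.inr j) := by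
  rw [edge_eq, Finset.sum_image, ← Finset.sum_product']
  · rfl
  · rintro ⟨a, b⟩ _ ⟨c, d⟩ _ h
    rw [Sym2.eq_iff] at h
    rcases h with ⟨h1, h2⟩ | ⟨h1, h2⟩
    · simp_all
    · simp at h1

lemma adj_lr (i : Fin m) (j : Fin n) :
    (completeBipartiteGraph (Fin m) (Fin n)).Adj (Sum.inl i) (Sum.inr j) := by simp

lemma mem_edge (i : Fin m) (j : Fin n) :
    s(Sum.inl i, Sum.inr j) ∈ (completeBipartiteGraph (Fin m) (Fin n)).edgeFinset := by
  rw [SimpleGraph.mem_edgeFinset, SimpleGraph.mem_edgeSet]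
  exact adj_lr i j

end helpers

/-- General membership lemma: a ±1 matrix satisfying the row+column condition yields an SEDF. -/
lemma mem_of_matrix {m n : ℕ} (v : ℕ → ℕ → ℤ)
    (hpm : ∀ x y, v x y = 1 ∨ v x y = -1)
    (hcond : ∀ x y, x < m → y < n →
      1 ≤ (∑ t ∈ Finset.range n, v x t) + (∑ t ∈ Finset.range m, v t y) - v x y) :
    ∃ f : Sym2 (Fin m ⊕ Fin n) → ℤ,
      IsSEDF (completeBipartiteGraph (Fin m) (Fin n)) f ∧
      ∑ e ∈ (completeBipartiteGraph (Fin m) (Fin n)).edgeFinset, f e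
        = ∑ x ∈ Finset.range m, ∑ y ∈ Finset.range n, v x y := by
  set g : (Fin m ⊕ Fin n) → (Fin m ⊕ Fin n) → ℤ := fun a b =>
    match a, b with
    | Sum.inl i, Sum.inr j => v i j
    | Sum.inr j, Sum.inl i => v i j
    | _, _ => 1 with hg
  have hsymm : ∀ a b, g a b = g b a := by rintro (a|a) (b|b) <;> rfl
  set f : Sym2 (Fin m ⊕ Fin n) → ℤ := Sym2.lift ⟨g, hsymm⟩ with hf
  have hfv : ∀ (i : Fin m) (j : Fin n), f s(Sum.inl i, Sum.inr j) = v i j := by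
    intro i j; rfl
  have hrow : ∀ i : Fin m,
      vweight (completeBipartiteGraph (Fin m) (Fin n)) f (Sum.inl i)
        = ∑ t ∈ Finset.range n, v i t := by
    intro i
    rw [vweight_inl]
    rw [← Fin.sum_univ_eq_sum_range (fun t => v i t) n]
    exact Finset.sum_congr rfl fun j _ => hfv i j
  have hcol : ∀ j : Fin n,
      vweight (completeBipartiteGraph (Fin m) (Fin n)) f (Sum.inr j)
        = ∑ t ∈ Finset.range m, v t j := by
    intro j
    rw [vweight_inr]
    rw [← Fin.sum_univ_eq_sum_range (fun t => v t j) m]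
    exact Finset.sum_congr rfl fun i _ => hfv i j
  refine ⟨f, ⟨?_, ?_⟩, ?_⟩
  · intro e he
    rw [edge_eq, Finset.mem_image] at he
    obtain ⟨⟨i, j⟩, -, rfl⟩ := he
    rw [hfv]; exact hpm i j
  · rintro (a|a) (b|b) hadj
    · simp at hadj
    · rw [hrow, hcol, hfv]
      exact hcond a b a.isLt b.isLt
    · rw [Sym2.eq_swap, hrow, hcol, hfv]
      have := hcond b a b.isLt a.isLt
      linarith
    · simp at hadj
  · rw [total_eq]
    rw [← Fin.sum_univ_eq_sum_range (fun x => ∑ y ∈ Finset.range n, v x y) m]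
    refine Finset.sum_congr rfl fun i _ => ?_
    rw [← Fin.sum_univ_eq_sum_range (fun t => v i t) n]
    exact Finset.sum_congr rfl fun j _ => hfv i j

/-- Lower bound. -/
lemma lower_bound {m n : ℕ} (hm0 : 0 < m) (hn0 : 0 < n) (hn : Even n)
    (f : Sym2 (Fin m ⊕ Fin n) → ℤ)
    (hf : IsSEDF (completeBipartiteGraph (Fin m) (Fin n)) f) :
    min (2 * (m : ℤ)) (n : ℤ) ≤ ∑ e ∈ (completeBipartiteGraph (Fin m) (Fin n)).edgeFinset, f e := by
  obtain ⟨hpm, hcond⟩ := hf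
  set a : Fin m → Fin n → ℤ := fun i j => f s(Sum.inl i, Sum.inr j) with ha
  have hav : ∀ i j, a i j = 1 ∨ a i j = -1 := fun i j => hpm _ (mem_edge i j)
  set R : Fin m → ℤ := fun i => ∑ j : Fin n, a i j with hR
  set C : Fin n → ℤ := fun j => ∑ i : Fin m, a i j with hC
  have hRw : ∀ i, vweight (completeBipartiteGraph (Fin m) (Fin n)) f (Sum.inl i) = R i :=
    fun i => vweight_inl f i
  have hCw : ∀ j, vweight (completeBipartiteGraph (Fin m) (Fin n)) f (Sum.inr j) = C j :=
    fun j => vweight_inr f j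
  have key : ∀ i j, 1 ≤ R i + C j - a i j := by
    intro i j
    have := hcond (adj_lr i j)
    rwa [hRw, hCw] at this
  have hSR : ∑ e ∈ (completeBipartiteGraph (Fin m) (Fin n)).edgeFinset, f e = ∑ i, R i :=
    total_eq f
  have hSC : ∑ e ∈ (completeBipartiteGraph (Fin m) (Fin n)).edgeFinset, f e = ∑ j, C j := by
    rw [total_eq f, Finset.sum_comm]
  by_cases hall : ∀ i, 2 ≤ R i
  · refine le_trans (min_le_left _ _) ?_
    rw [hSR]
    calc (2 * (m : ℤ)) = ∑ _i : Fin m, (2 : ℤ) := by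
          rw [Finset.sum_const, Finset.card_univ, Fintype.card_fin]; ring
      _ ≤ ∑ i, R i := Finset.sum_le_sum fun i _ => hall i
  · push_neg at hall
    obtain ⟨i0, hi0⟩ := hall
    have hdvd : (2 : ℤ) ∣ (R i0 - n) := by
      have : R i0 - n = ∑ j : Fin n, (a i0 j - 1) := by
        rw [Finset.sum_sub_distrib, Finset.sum_const, Finset.card_univ, Fintype.card_fin]
        simp [hR]
      rw [this]
      refine Finset.dvd_sum fun j _ => ?_
      rcases hav i0 j with h | h <;> rw [h] <;> norm_num
    have hR0 : R i0 ≤ 0 := by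
      obtain ⟨t, ht⟩ := hn
      obtain ⟨u, hu⟩ := hdvd
      omega
    refine le_trans (min_le_right _ _) ?_
    rw [hSC]
    have step : ∀ j, 1 + a i0 j - R i0 ≤ C j := fun j => by have := key i0 j; linarith
    calc (n : ℤ) ≤ ∑ j : Fin n, (1 + a i0 j - R i0) := by
          rw [Finset.sum_sub_distrib, Finset.sum_add_distrib, Finset.sum_const,
            Finset.sum_const, Finset.card_univ, Fintype.card_fin]
          have : ∑ j : Fin n, a i0 j = R i0 := rfl
          rw [this]
          simp only [nsmul_eq_mul]
          have h1 : (1:ℤ) ≤ n := by exact_mod_cast hn0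
          nlinarith [mul_nonneg (sub_nonneg.2 h1) (neg_nonneg.2 hR0)]
      _ ≤ ∑ j, C j := Finset.sum_le_sum fun j _ => step j

lemma modL1 (k x t : ℕ) (hk : 0 < k) (ht : t < k) :
    (x + (t + (k - x % k)) % k) % k = t := by
  have ha : x % k < k := Nat.mod_lt _ hk
  have h1 : (x + (t + (k - x % k)) % k) % k = (x + (t + (k - x % k))) % k :=
    (Nat.ModEq.add_left x (Nat.mod_modEq _ k))
  have h2 : (x + (t + (k - x % k))) % k = (x % k + (t + (k - x % k))) % k :=
    ((Nat.mod_modEq x k).add_right _).symm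
  rw [h1, h2, show x % k + (t + (k - x % k)) = t + k by omega, Nat.add_mod_right,
    Nat.mod_eq_of_lt ht]

lemma modL2 (k x y : ℕ) (hk : 0 < k) (hy : y < k) :
    ((x + y) % k + (k - x % k)) % k = y := by
  have ha : x % k < k := Nat.mod_lt _ hk
  have h1 : ((x + y) % k + (k - x % k)) % k = ((x + y) + (k - x % k)) % k :=
    (Nat.mod_modEq (x + y) k).add_right _
  have h2 : ((x + y) + (k - x % k)) % k = ((x % k + y) + (k - x % k)) % k :=
    (((Nat.mod_modEq x k).add_right y).add_right _).symm
  rw [h1, h2, show x % k + y + (k - x % k) = y + k by omega, Nat.add_mod_right,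
    Nat.mod_eq_of_lt hy]

lemma circulant (k c x : ℕ) (hk : 0 < k) (hc : c ≤ k) :
    #((Finset.range k).filter fun y => (x + y) % k < c) = c := by
  rw [← Finset.card_range c]
  apply Finset.card_bij' (fun y _ => (x + y) % k) (fun t _ => (t + (k - x % k)) % k)
  · intro y hy
    simp only [Finset.mem_filter] at hy
    simpa using hy.2
  · intro t ht
    simp only [Finset.mem_range] at ht
    simp only [Finset.mem_filter, Finset.mem_range]
    exact ⟨Nat.mod_lt _ hk, by rw [modL1 k x t hk (lt_of_lt_of_le ht hc)]; simpa using ht⟩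
  · intro y hy
    simp only [Finset.mem_filter, Finset.mem_range] at hy
    exact modL2 k x y hk hy.1
  · intro t ht
    simp only [Finset.mem_range] at ht
    exact modL1 k x t hk (lt_of_lt_of_le ht hc)

lemma sum_pm (s : Finset ℕ) (P : ℕ → Prop) [DecidablePred P] :
    ∑ y ∈ s, (if P y then (1:ℤ) else -1) = 2 * #(s.filter P) - #s := by
  have : ∀ y, (if P y then (1:ℤ) else -1) = (if P y then (2:ℤ) else 0) - 1 := by
    intro y; split <;> ring
  simp_rw [this, Finset.sum_sub_distrib, Finset.sum_const, ← Finset.sum_filter,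
    Finset.sum_const]
  ring

def vA (a b x y : ℕ) : ℤ :=
  if (x < a ∧ y ≤ b) ∨ (a ≤ x ∧ (b ≤ y ∨ y = 0)) then 1 else -1

lemma constructA (a b : ℕ) (ha : 0 < a) (hab : 2 * a ≤ b) :
    ∃ f : Sym2 (Fin (a+a) ⊕ Fin (b+b)) → ℤ,
      IsSEDF (completeBipartiteGraph (Fin (a+a)) (Fin (b+b))) f ∧
      ∑ e ∈ (completeBipartiteGraph (Fin (a+a)) (Fin (b+b))).edgeFinset, f e
        = 2 * ((a:ℤ) + a) := by
  have hb : 0 < b := by omega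
  have hrow : ∀ x, x < a + a → ∑ y ∈ Finset.range (b+b), vA a b x y = 2 := by
    intro x hx
    simp only [vA]
    rw [sum_pm (Finset.range (b+b)) (fun y => (x < a ∧ y ≤ b) ∨ (a ≤ x ∧ (b ≤ y ∨ y = 0)))]
    by_cases hxa : x < a
    · have hfe : (Finset.range (b+b)).filter
          (fun y => (x < a ∧ y ≤ b) ∨ (a ≤ x ∧ (b ≤ y ∨ y = 0))) = Finset.range (b+1) := by
        ext y; simp only [Finset.mem_filter, Finset.mem_range]; omega
      rw [hfe, Finset.card_range, Finset.card_range]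
      omega
    · have hfe : (Finset.range (b+b)).filter
          (fun y => (x < a ∧ y ≤ b) ∨ (a ≤ x ∧ (b ≤ y ∨ y = 0)))
            = insert 0 (Finset.Ico b (b+b)) := by
        ext y; simp only [Finset.mem_filter, Finset.mem_range, Finset.mem_insert,
          Finset.mem_Ico]; omega
      rw [hfe, Finset.card_insert_of_notMem (by simp only [Finset.mem_Ico, not_and, not_le]; omega),
        Nat.card_Ico, Finset.card_range]
      omega
  have hcol : ∀ y, y < b + b → 0 ≤ ∑ x ∈ Finset.range (a+a), vA a b x y := by
    intro y hy
    simp only [vA]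
    rw [sum_pm (Finset.range (a+a)) (fun x => (x < a ∧ y ≤ b) ∨ (a ≤ x ∧ (b ≤ y ∨ y = 0)))]
    have hcard : a ≤ #((Finset.range (a+a)).filter
        (fun x => (x < a ∧ y ≤ b) ∨ (a ≤ x ∧ (b ≤ y ∨ y = 0)))) := by
      by_cases hyb : y ≤ b
      · calc a = #(Finset.range a) := (Finset.card_range a).symm
          _ ≤ _ := Finset.card_le_card (by
            intro t ht
            simp only [Finset.mem_range] at ht
            simp only [Finset.mem_filter, Finset.mem_range]
            omega)
      · calc a = #(Finset.Ico a (a+a)) := by rw [Nat.card_Ico]; omega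
          _ ≤ _ := Finset.card_le_card (by
            intro t ht
            simp only [Finset.mem_Ico] at ht
            simp only [Finset.mem_filter, Finset.mem_range]
            omega)
    rw [Finset.card_range]
    omega
  obtain ⟨f, hf, hsum⟩ := mem_of_matrix (m := a+a) (n := b+b) (vA a b)
    (fun x y => by unfold vA; split <;> simp)
    (by
      intro x y hx hy
      have h1 := hrow x hx
      have h2 := hcol y hy
      have h3 : vA a b x y ≤ 1 := by unfold vA; split <;> simp
      linarith)
  refine ⟨f, hf, ?_⟩
  rw [hsum]
  rw [Finset.sum_congr rfl (fun x hx => hrow x (Finset.mem_range.mp hx)),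
    Finset.sum_const, Finset.card_range]
  push_cast; ring

def vB (a b x y : ℕ) : ℤ :=
  if b ≤ x then (if y < b then 1 else -1)
  else if y < b then (if (x + y) % b < b + 1 - a then 1 else -1)
  else if (x + (y - b)) % b < a then 1 else -1

lemma constructB (a b : ℕ) (ha : 0 < a) (hab : a ≤ b) (hba : b ≤ 2 * a) :
    ∃ f : Sym2 (Fin (a+a) ⊕ Fin (b+b)) → ℤ,
      IsSEDF (completeBipartiteGraph (Fin (a+a)) (Fin (b+b))) f ∧
      ∑ e ∈ (completeBipartiteGraph (Fin (a+a)) (Fin (b+b))).edgeFinset, f e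
        = ((b:ℤ) + b) := by
  have hb : 0 < b := by omega
  -- row sums
  have hrow1 : ∀ x, x < b → ∑ y ∈ Finset.range (b+b), vB a b x y = 2 := by
    intro x hx
    rw [Finset.range_eq_Ico, ← Finset.sum_Ico_consecutive _ (Nat.zero_le b) (by omega : b ≤ b+b),
      ← Finset.range_eq_Ico]
    have e1 : ∑ y ∈ Finset.range b, vB a b x y
        = ∑ y ∈ Finset.range b, (if (x + y) % b < b + 1 - a then (1:ℤ) else -1) := by
      refine Finset.sum_congr rfl fun y hy => ?_
      simp only [Finset.mem_range] at hy
      unfold vB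
      rw [if_neg (by omega), if_pos hy]
    have e2 : ∑ y ∈ Finset.Ico b (b+b), vB a b x y
        = ∑ t ∈ Finset.range b, (if (x + t) % b < a then (1:ℤ) else -1) := by
      rw [Finset.sum_Ico_eq_sum_range]
      have : b + b - b = b := by omega
      rw [this]
      refine Finset.sum_congr rfl fun t ht => ?_
      have hbt : b + t - b = t := by omega
      unfold vB
      rw [if_neg (by omega), if_neg (by omega), hbt]
    rw [e1, e2, sum_pm (Finset.range b) (fun y => (x + y) % b < b + 1 - a),
      sum_pm (Finset.range b) (fun y => (x + y) % b < a),
      circulant b (b+1-a) x hb (by omega), circulant b a x hb (by omega), Finset.card_range]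
    omega
  have hrow2 : ∀ x, b ≤ x → ∑ y ∈ Finset.range (b+b), vB a b x y = 0 := by
    intro x hx
    have e1 : ∑ y ∈ Finset.range (b+b), vB a b x y
        = ∑ y ∈ Finset.range (b+b), (if y < b then (1:ℤ) else -1) := by
      refine Finset.sum_congr rfl fun y hy => ?_
      unfold vB
      rw [if_pos hx]
    rw [e1, sum_pm (Finset.range (b+b)) (fun y => y < b)]
    have hfe : (Finset.range (b+b)).filter (fun y => y < b) = Finset.range b := by
      ext y; simp only [Finset.mem_filter, Finset.mem_range]; omega
    rw [hfe, Finset.card_range, Finset.card_range]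
    omega
  -- column sums
  have hcol1 : ∀ y, y < b → ∑ x ∈ Finset.range (a+a), vB a b x y = 2 := by
    intro y hy
    rw [Finset.range_eq_Ico, ← Finset.sum_Ico_consecutive _ (Nat.zero_le b) (by omega : b ≤ a+a),
      ← Finset.range_eq_Ico]
    have e1 : ∑ x ∈ Finset.range b, vB a b x y
        = ∑ x ∈ Finset.range b, (if (y + x) % b < b + 1 - a then (1:ℤ) else -1) := by
      refine Finset.sum_congr rfl fun x hx => ?_
      simp only [Finset.mem_range] at hx
      unfold vB
      rw [if_neg (by omega), if_pos hy, Nat.add_comm x y]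
    have e2 : ∑ x ∈ Finset.Ico b (a+a), vB a b x y
        = ∑ x ∈ Finset.Ico b (a+a), (1:ℤ) := by
      refine Finset.sum_congr rfl fun x hx => ?_
      simp only [Finset.mem_Ico] at hx
      unfold vB
      rw [if_pos hx.1, if_pos hy]
    rw [e1, e2, sum_pm (Finset.range b) (fun x => (y + x) % b < b + 1 - a),
      circulant b (b+1-a) y hb (by omega), Finset.card_range, Finset.sum_const, Nat.card_Ico]
    simp only [nsmul_eq_mul, mul_one]
    omega
  have hcol2 : ∀ y, b ≤ y → y < b + b → ∑ x ∈ Finset.range (a+a), vB a b x y = 0 := by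
    intro y hy hy2
    rw [Finset.range_eq_Ico, ← Finset.sum_Ico_consecutive _ (Nat.zero_le b) (by omega : b ≤ a+a),
      ← Finset.range_eq_Ico]
    have e1 : ∑ x ∈ Finset.range b, vB a b x y
        = ∑ x ∈ Finset.range b, (if ((y - b) + x) % b < a then (1:ℤ) else -1) := by
      refine Finset.sum_congr rfl fun x hx => ?_
      simp only [Finset.mem_range] at hx
      unfold vB
      rw [if_neg (by omega), if_neg (by omega), Nat.add_comm x (y - b)]
    have e2 : ∑ x ∈ Finset.Ico b (a+a), vB a b x y
        = ∑ x ∈ Finset.Ico b (a+a), (-1:ℤ) := by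
      refine Finset.sum_congr rfl fun x hx => ?_
      simp only [Finset.mem_Ico] at hx
      unfold vB
      rw [if_pos hx.1, if_neg (by omega)]
    rw [e1, e2, sum_pm (Finset.range b) (fun x => ((y - b) + x) % b < a),
      circulant b a (y - b) hb (by omega), Finset.card_range, Finset.sum_const, Nat.card_Ico]
    simp only [nsmul_eq_mul, mul_neg, mul_one]
    omega
  obtain ⟨f, hf, hsum⟩ := mem_of_matrix (m := a+a) (n := b+b) (vB a b)
    (fun x y => by unfold vB; split <;> [skip; split] <;> split <;> simp)
    (by
      intro x y hx hy
      by_cases hxb : x < b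
      · have h1 := hrow1 x hxb
        have h3 : vB a b x y ≤ 1 := by
          unfold vB; split <;> [skip; split] <;> split <;> simp
        have h2 : (0:ℤ) ≤ ∑ t ∈ Finset.range (a+a), vB a b t y := by
          by_cases hyb : y < b
          · rw [hcol1 y hyb]; norm_num
          · rw [hcol2 y (by omega) hy]
      
        linarith
      · have h1 := hrow2 x (by omega)
        by_cases hyb : y < b
        · have h2 := hcol1 y hyb
          have h3 : vB a b x y = 1 := by
            unfold vB; rw [if_pos (by omega : b ≤ x), if_pos hyb]
          rw [h1, h2, h3]; norm_num
        · have h2 := hcol2 y (by omega) hy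
          have h3 : vB a b x y = -1 := by
            unfold vB; rw [if_pos (by omega : b ≤ x), if_neg hyb]
          rw [h1, h2, h3]; norm_num)
  refine ⟨f, hf, ?_⟩
  rw [hsum]
  rw [Finset.range_eq_Ico, ← Finset.sum_Ico_consecutive _ (Nat.zero_le b) (by omega : b ≤ a+a),
    ← Finset.range_eq_Ico]
  rw [Finset.sum_congr rfl (fun x hx => hrow1 x (Finset.mem_range.mp hx)),
    Finset.sum_congr rfl (fun x hx => hrow2 x (Finset.mem_Ico.mp hx).1),
    Finset.sum_const, Finset.sum_const, Finset.card_range, Nat.card_Ico]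
  simp only [nsmul_eq_mul, mul_zero, add_zero]
  push_cast; ring


/-- for even positive integers `m ≤ n`,
`γ'ₛ(K_{m,n}) = min {2m, n}`. -/
theorem stmt10 (m n : ℕ) (hm0 : 0 < m) (hmn : m ≤ n) (hm : Even m) (hn : Even n) :
    IsLeast
      {s : ℤ | ∃ f : Sym2 (Fin m ⊕ Fin n) → ℤ,
        IsSEDF (completeBipartiteGraph (Fin m) (Fin n)) f ∧
          s = ∑ e ∈ (completeBipartiteGraph (Fin m) (Fin n)).edgeFinset, f e}
      (min (2 * (m : ℤ)) (n : ℤ)) := by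
  constructor
  · obtain ⟨a, rfl⟩ := hm
    obtain ⟨b, rfl⟩ := hn
    have ha : 0 < a := by omega
    rcases le_or_gt (2 * (a + a)) (b + b) with h | h
    · obtain ⟨f, hf, hsum⟩ := constructA a b ha (by omega)
      refine ⟨f, hf, ?_⟩
      rw [hsum]
      rw [min_eq_left (by push_cast; omega)]
      push_cast; ring
    · obtain ⟨f, hf, hsum⟩ := constructB a b ha (by omega) (by omega)
      refine ⟨f, hf, ?_⟩
      rw [hsum]
      rw [min_eq_right (by push_cast; omega)]
      push_cast; ring
  · rintro s ⟨f, hf, rfl⟩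
    exact lower_bound hm0 (by omega) hn f hf
end

section
/- For n ≥ 3 odd, the complete bipartite graph K_{2,n-2} has signed edge domination number equal to 2 if n = 3, equal to 4 if n = 5, and equal to 6 if n ≥ 7. -/
open Finset

open scoped Classical

namespace Stmt12Aux

variable {m : ℕ}

lemma edge_mem (e : Sym2 (Fin 2 ⊕ Fin m)) :
    e ∈ (completeBipartiteGraph (Fin 2) (Fin m)).edgeFinset ↔
      ∃ i j, e = s(Sum.inl i, Sum.inr j) := by
  induction e using Sym2.ind with
  | _ u v =>
    simp only [SimpleGraph.mem_edgeFinset, SimpleGraph.mem_edgeSet]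
    constructor
    · rintro (⟨hu, hv⟩ | ⟨hu, hv⟩)
      · obtain ⟨i, rfl⟩ := Sum.isLeft_iff.mp hu
        obtain ⟨j, rfl⟩ := Sum.isRight_iff.mp hv
        exact ⟨i, j, rfl⟩
      · obtain ⟨j, rfl⟩ := Sum.isRight_iff.mp hu
        obtain ⟨i, rfl⟩ := Sum.isLeft_iff.mp hv
        exact ⟨i, j, Sym2.eq_swap⟩
    · rintro ⟨i, j, h⟩
      rw [Sym2.eq_iff] at h
      rcases h with ⟨rfl, rfl⟩ | ⟨rfl, rfl⟩ <;> simp [completeBipartiteGraph]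

lemma edge_eq : (completeBipartiteGraph (Fin 2) (Fin m)).edgeFinset =
    Finset.image (fun p : Fin 2 × Fin m => s(Sum.inl p.1, Sum.inr p.2)) univ := by
  ext e
  simp only [edge_mem, Finset.mem_image, Finset.mem_univ, true_and, Prod.exists]
  constructor
  · rintro ⟨i, j, rfl⟩; exact ⟨i, j, rfl⟩
  · rintro ⟨i, j, rfl⟩; exact ⟨i, j, rfl⟩

lemma sum_edge (f : Sym2 (Fin 2 ⊕ Fin m) → ℤ) :
    ∑ e ∈ (completeBipartiteGraph (Fin 2) (Fin m)).edgeFinset, f e =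
      ∑ i : Fin 2, ∑ j : Fin m, f s(Sum.inl i, Sum.inr j) := by
  rw [edge_eq, Finset.sum_image, ← Finset.sum_product']
  · rfl
  · rintro ⟨a, b⟩ - ⟨c, d⟩ - h
    rw [Sym2.eq_iff] at h
    rcases h with ⟨h1, h2⟩ | ⟨h1, h2⟩ <;> simp_all

lemma mem_inc_iff (v : Fin 2 ⊕ Fin m) (e : Sym2 (Fin 2 ⊕ Fin m)) :
    e ∈ (completeBipartiteGraph (Fin 2) (Fin m)).incidenceFinset v ↔
      e ∈ (completeBipartiteGraph (Fin 2) (Fin m)).edgeFinset ∧ v ∈ e := by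
  simp [SimpleGraph.mem_incidenceFinset, SimpleGraph.incidenceSet, SimpleGraph.mem_edgeFinset]

lemma inc_inl (i : Fin 2) : (completeBipartiteGraph (Fin 2) (Fin m)).incidenceFinset (Sum.inl i) =
    Finset.image (fun j : Fin m => s(Sum.inl i, Sum.inr j)) univ := by
  ext e
  rw [mem_inc_iff, edge_mem]
  simp only [Finset.mem_image, Finset.mem_univ, true_and]
  constructor
  · rintro ⟨⟨i', j, rfl⟩, hv⟩
    simp only [Sym2.mem_iff] at hv
    rcases hv with h | h
    · obtain rfl : i = i' := by simpa using h
      exact ⟨j, rfl⟩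
    · simp at h
  · rintro ⟨j, rfl⟩
    exact ⟨⟨i, j, rfl⟩, by simp⟩

lemma vweight_inl (f : Sym2 (Fin 2 ⊕ Fin m) → ℤ) (i : Fin 2) :
    vweight (completeBipartiteGraph (Fin 2) (Fin m)) f (Sum.inl i) =
      ∑ j : Fin m, f s(Sum.inl i, Sum.inr j) := by
  rw [vweight, inc_inl, Finset.sum_image]
  rintro a - b - h
  rw [Sym2.eq_iff] at h
  rcases h with ⟨h1, h2⟩ | ⟨h1, h2⟩ <;> simp_all

lemma inc_inr (j : Fin m) : (completeBipartiteGraph (Fin 2) (Fin m)).incidenceFinset (Sum.inr j) =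
    {s(Sum.inl 0, Sum.inr j), s(Sum.inl 1, Sum.inr j)} := by
  ext e
  rw [mem_inc_iff, edge_mem]
  simp only [Finset.mem_insert, Finset.mem_singleton]
  constructor
  · rintro ⟨⟨i, j', rfl⟩, hv⟩
    simp only [Sym2.mem_iff] at hv
    rcases hv with h | h
    · simp at h
    · obtain rfl : j = j' := by simpa using h
      fin_cases i
      · exact Or.inl rfl
      · exact Or.inr rfl
  · rintro (rfl | rfl)
    · exact ⟨⟨0, j, rfl⟩, by simp⟩
    · exact ⟨⟨1, j, rfl⟩, by simp⟩

lemma vweight_inr (f : Sym2 (Fin 2 ⊕ Fin m) → ℤ) (j : Fin m) :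
    vweight (completeBipartiteGraph (Fin 2) (Fin m)) f (Sum.inr j) =
      f s(Sum.inl 0, Sum.inr j) + f s(Sum.inl 1, Sum.inr j) := by
  rw [vweight, inc_inr, Finset.sum_pair]
  intro h
  rw [Sym2.eq_iff] at h
  rcases h with ⟨h1, h2⟩ | ⟨h1, h2⟩ <;> simp_all [Fin.ext_iff]

/-- symmetrize a table into a function on `Sym2`. -/
def mkF (g : Fin 2 → Fin m → ℤ) : Sym2 (Fin 2 ⊕ Fin m) → ℤ :=
  Sym2.lift ⟨fun u v => match u, v with
    | Sum.inl i, Sum.inr j => g i j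
    | Sum.inr j, Sum.inl i => g i j
    | _, _ => 1, by intro u v; cases u <;> cases v <;> rfl⟩

@[simp] lemma mkF_apply (g : Fin 2 → Fin m → ℤ) (i : Fin 2) (j : Fin m) :
    mkF g s(Sum.inl i, Sum.inr j) = g i j := rfl

lemma adj_lr (i : Fin 2) (j : Fin m) :
    (completeBipartiteGraph (Fin 2) (Fin m)).Adj (Sum.inl i) (Sum.inr j) :=
  Or.inl ⟨rfl, rfl⟩

lemma isSEDF_of_table (g : Fin 2 → Fin m → ℤ)
    (hg : ∀ i j, g i j = 1 ∨ g i j = -1)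
    (hc : ∀ i j, 1 ≤ (∑ j', g i j') + (g 0 j + g 1 j) - g i j) :
    IsSEDF (completeBipartiteGraph (Fin 2) (Fin m)) (mkF g) := by
  constructor
  · intro e he
    rw [edge_mem] at he
    obtain ⟨i, j, rfl⟩ := he
    simpa using hg i j
  · intro u v huv
    rcases huv with ⟨hu, hv⟩ | ⟨hu, hv⟩
    · obtain ⟨i, rfl⟩ := Sum.isLeft_iff.mp hu
      obtain ⟨j, rfl⟩ := Sum.isRight_iff.mp hv
      rw [vweight_inl, vweight_inr]
      simpa using hc i j
    · obtain ⟨j, rfl⟩ := Sum.isRight_iff.mp hu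
      obtain ⟨i, rfl⟩ := Sum.isLeft_iff.mp hv
      rw [vweight_inl, vweight_inr, Sym2.eq_swap (a := Sum.inr j)]
      simp only [mkF_apply]
      have h := hc i j
      linarith

/-- sum of `mkF g` over the edges equals the table sum -/
lemma sum_mkF (g : Fin 2 → Fin m → ℤ) :
    ∑ e ∈ (completeBipartiteGraph (Fin 2) (Fin m)).edgeFinset, mkF g e =
      ∑ i : Fin 2, ∑ j, g i j := by
  rw [sum_edge]
  simp

/-- The main counting lemma. -/
lemma lower (hm : 1 ≤ m) (hmo : Odd m) (g : Fin 2 → Fin m → ℤ)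
    (hg : ∀ i j, g i j = 1 ∨ g i j = -1)
    (hc : ∀ i j, 1 ≤ (∑ j', g i j') + (g 0 j + g 1 j) - g i j) :
    2 ≤ ∑ i : Fin 2, ∑ j, g i j ∧
      (2 ≤ m → 4 ≤ ∑ i : Fin 2, ∑ j, g i j) ∧
      (4 ≤ m → 6 ≤ ∑ i : Fin 2, ∑ j, g i j) := by
  obtain ⟨t, ht⟩ := hmo
  set S : ℤ := ∑ i : Fin 2, ∑ j, g i j with hSdef
  have hS : S = (∑ j, g 0 j) + (∑ j, g 1 j) := by rw [hSdef, Fin.sum_univ_two]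
  have hSb : S = ∑ j, (g 0 j + g 1 j) := by rw [hS, Finset.sum_add_distrib]
  have hbj : ∀ j, 2 - S ≤ g 0 j + g 1 j := by
    intro j
    have h0 := hc 0 j
    have h1 := hc 1 j
    rw [hS]; linarith
  have hb2 : ∀ j, g 0 j + g 1 j = 2 ∨ g 0 j + g 1 j = 0 ∨ g 0 j + g 1 j = -2 := by
    intro j
    rcases hg 0 j with h | h <;> rcases hg 1 j with h' | h' <;> omega
  have hSeven : ∃ k, S = 2 * k := by
    have : (2 : ℤ) ∣ S := by
      rw [hSb]
      refine Finset.dvd_sum fun j _ => ?_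
      rcases hb2 j with h | h | h <;> rw [h] <;> decide
    exact this
  obtain ⟨k, hk⟩ := hSeven
  have haOdd : ∀ i : Fin 2, ∃ c, (∑ j, g i j) + m = 2 * c := by
    intro i
    have h2 : (2 : ℤ) ∣ ∑ j, (g i j + 1) := by
      refine Finset.dvd_sum fun j _ => ?_
      rcases hg i j with h | h <;> rw [h] <;> decide
    obtain ⟨c, hc'⟩ := h2
    refine ⟨c, ?_⟩
    rw [← hc', Finset.sum_add_distrib, Finset.sum_const, Finset.card_univ,
      Fintype.card_fin, nsmul_eq_mul, mul_one]
  have hS2 : 2 ≤ S := by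
    by_contra h
    push_neg at h
    have hS0 : S ≤ 0 := by omega
    have hall : ∀ j, g 0 j + g 1 j = 2 := by
      intro j
      have := hbj j
      rcases hb2 j with h' | h' | h' <;> omega
    have : S = 2 * m := by
      rw [hSb, Finset.sum_congr rfl fun j _ => hall j, Finset.sum_const,
        Finset.card_univ, Fintype.card_fin, nsmul_eq_mul]
      ring
    omega
  have hb2ex : ∃ j, g 0 j + g 1 j = 2 := by
    by_contra h
    push_neg at h
    have : S ≤ 0 := by
      rw [hSb]
      refine Finset.sum_nonpos fun j _ => ?_
      rcases hb2 j with h' | h' | h' <;> first | exact absurd h' (h j) | omega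
    omega
  have ha1 : ∀ i : Fin 2, 1 ≤ ∑ j, g i j := by
    intro i
    obtain ⟨j, hj⟩ := hb2ex
    have h01 : g 0 j = 1 ∧ g 1 j = 1 := by
      rcases hg 0 j with h | h <;> rcases hg 1 j with h' | h' <;> omega
    have hcij := hc i j
    have hgi : g i j = 1 := by
      have : i = 0 ∨ i = 1 := by omega
      rcases this with rfl | rfl
      · exact h01.1
      · exact h01.2
    obtain ⟨c, hcpar⟩ := haOdd i
    omega
  have hkey : ∀ i0 : Fin 2, (∑ j, g i0 j) = 1 → S = m + 1 := by
    intro i0 h1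
    have hgb : ∀ j, g i0 j = (g 0 j + g 1 j) - 1 := by
      intro j
      have hcij := hc i0 j
      rw [h1] at hcij
      have hi : i0 = 0 ∨ i0 = 1 := by omega
      rcases hi with rfl | rfl <;> rcases hg 0 j with h | h <;>
        rcases hg 1 j with h' | h' <;> omega
    have : (∑ j, g i0 j) = ∑ j, ((g 0 j + g 1 j) - 1) :=
      Finset.sum_congr rfl fun j _ => hgb j
    rw [h1, Finset.sum_sub_distrib, Finset.sum_const, Finset.card_univ,
      Fintype.card_fin, nsmul_eq_mul, mul_one, ← hSb] at this
    omega
  refine ⟨hS2, ?_, ?_⟩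
  · intro hm2
    by_contra h
    push_neg at h
    have ha0 := ha1 0
    have ha1' := ha1 1
    have h0 : (∑ j, g 0 j) = 1 := by rw [hS] at *; omega
    have := hkey 0 h0
    omega
  · intro hm4
    by_contra h
    push_neg at h
    have ha0 := ha1 0
    have ha1' := ha1 1
    obtain ⟨c0, hc0⟩ := haOdd 0
    obtain ⟨c1, hc1⟩ := haOdd 1
    have h01 : (∑ j, g 0 j) = 1 ∨ (∑ j, g 1 j) = 1 := by rw [hS] at *; omega
    rcases h01 with h0 | h0 <;> [have := hkey 0 h0; have := hkey 1 h0] <;> omega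

/-- lower-bound half, formulated on the solution set. -/
lemma lowerBound (hm : 1 ≤ m) (hmo : Odd m) (s : ℤ)
    (hs : s ∈ {s : ℤ | ∃ f : Sym2 (Fin 2 ⊕ Fin m) → ℤ,
        IsSEDF (completeBipartiteGraph (Fin 2) (Fin m)) f ∧
          s = ∑ e ∈ (completeBipartiteGraph (Fin 2) (Fin m)).edgeFinset, f e}) :
    2 ≤ s ∧ (2 ≤ m → 4 ≤ s) ∧ (4 ≤ m → 6 ≤ s) := by
  obtain ⟨f, hf, rfl⟩ := hs
  rw [sum_edge]
  refine lower hm hmo (fun i j => f s(Sum.inl i, Sum.inr j)) ?_ ?_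
  · intro i j
    exact hf.1 _ ((edge_mem _).mpr ⟨i, j, rfl⟩)
  · intro i j
    have h := hf.2 (adj_lr i j)
    rw [vweight_inl, vweight_inr] at h
    exact h

lemma rowsum (p : ℕ) (hpm : p ≤ m) :
    ∑ j : Fin m, (if (j : ℕ) < p then (1 : ℤ) else -1) = 2 * (p : ℤ) - m := by
  rw [Fin.sum_univ_eq_sum_range (fun j => if j < p then (1 : ℤ) else -1),
    Finset.range_eq_Ico, ← Finset.sum_Ico_consecutive _ (Nat.zero_le p) hpm,
    Finset.sum_congr rfl (fun j hj => if_pos (Finset.mem_Ico.mp hj).2),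
    Finset.sum_congr (rfl : Finset.Ico p m = _)
      (fun j hj => if_neg (by have := (Finset.mem_Ico.mp hj).1; omega)),
    Finset.sum_const, Finset.sum_const, Nat.card_Ico, Nat.card_Ico]
  have hcast : ((m - p : ℕ) : ℤ) = (m : ℤ) - p := by
    rw [Nat.cast_sub hpm]
  simp only [nsmul_eq_mul, mul_one, Nat.sub_zero, mul_neg_one, hcast]
  ring

/-- membership: `m = 1`, value `2`. -/
lemma mem_one :
    (2 : ℤ) ∈ {s : ℤ | ∃ f : Sym2 (Fin 2 ⊕ Fin 1) → ℤ,
        IsSEDF (completeBipartiteGraph (Fin 2) (Fin 1)) f ∧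
          s = ∑ e ∈ (completeBipartiteGraph (Fin 2) (Fin 1)).edgeFinset, f e} := by
  refine ⟨mkF (fun _ _ => 1), isSEDF_of_table _ (fun _ _ => Or.inl rfl) ?_, ?_⟩
  · intro i j
    simp
  · rw [sum_mkF]
    simp

/-- membership: `m = 3`, value `4`. -/
lemma mem_three :
    (4 : ℤ) ∈ {s : ℤ | ∃ f : Sym2 (Fin 2 ⊕ Fin 3) → ℤ,
        IsSEDF (completeBipartiteGraph (Fin 2) (Fin 3)) f ∧
          s = ∑ e ∈ (completeBipartiteGraph (Fin 2) (Fin 3)).edgeFinset, f e} := by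
  refine ⟨mkF ![![1, 1, -1], ![1, 1, 1]], isSEDF_of_table _ (by decide) (by decide), ?_⟩
  rw [sum_mkF]
  decide

/-- membership: odd `m ≥ 5`, value `6`. -/
lemma mem_five (hmo : Odd m) (h5 : 5 ≤ m) :
    (6 : ℤ) ∈ {s : ℤ | ∃ f : Sym2 (Fin 2 ⊕ Fin m) → ℤ,
        IsSEDF (completeBipartiteGraph (Fin 2) (Fin m)) f ∧
          s = ∑ e ∈ (completeBipartiteGraph (Fin 2) (Fin m)).edgeFinset, f e} := by
  obtain ⟨t, ht⟩ := hmo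
  set p : ℕ := t + 2 with hp
  have hpm : p ≤ m := by omega
  set g : Fin 2 → Fin m → ℤ := fun _ j => if (j : ℕ) < p then 1 else -1 with hgdef
  have hrow : ∀ i : Fin 2, (∑ j, g i j) = 3 := by
    intro i
    rw [hgdef]
    rw [rowsum p hpm]
    omega
  refine ⟨mkF g, isSEDF_of_table g (fun i j => by rw [hgdef]; dsimp only; split <;> simp) ?_, ?_⟩
  · intro i j
    rw [hrow i]
    by_cases hj : (j : ℕ) < p
    · simp only [hgdef, if_pos hj]
      norm_num
    · simp only [hgdef, if_neg hj]
      norm_num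
  · rw [sum_mkF, Fin.sum_univ_two]
    have h0 := hrow 0
    have h1 := hrow 1
    linarith

end Stmt12Aux

theorem stmt12 (n : ℕ) (hn3 : 3 ≤ n) (hn : Odd n) :
    IsLeast
      {s : ℤ | ∃ f : Sym2 (Fin 2 ⊕ Fin (n - 2)) → ℤ,
        IsSEDF (completeBipartiteGraph (Fin 2) (Fin (n - 2))) f ∧
          s = ∑ e ∈ (completeBipartiteGraph (Fin 2) (Fin (n - 2))).edgeFinset, f e}
      (if n = 3 then 2 else if n = 5 then 4 else 6) := by
  obtain ⟨w, hw⟩ := hn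
  have hm1 : 1 ≤ n - 2 := by omega
  have hmo : Odd (n - 2) := ⟨w - 1, by omega⟩
  by_cases h3 : n = 3
  · subst h3
    simp only [if_pos rfl]
    exact ⟨Stmt12Aux.mem_one, fun s hs => (Stmt12Aux.lowerBound hm1 hmo s hs).1⟩
  · by_cases h5 : n = 5
    · subst h5
      rw [if_neg (show (5:ℕ) ≠ 3 by norm_num), if_pos rfl]
      exact ⟨Stmt12Aux.mem_three, fun s hs =>
        (Stmt12Aux.lowerBound hm1 hmo s hs).2.1 (by norm_num)⟩
    · have h7 : 7 ≤ n := by omega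
      simp only [if_neg h3, if_neg h5]
      exact ⟨Stmt12Aux.mem_five hmo (by omega), fun s hs =>
        (Stmt12Aux.lowerBound hm1 hmo s hs).2.2 (by omega)⟩
end

section
/- Let G be a finite simple graph with n vertices, m edges, and minimum degree at least 1. Then γ'ₛ(G) ≥ n - m. -/
open Finset

open scoped Classical

/-- Auxiliary: a sum of `±1` values equals twice the number of `+1`s minus the count. -/
lemma sum_pm_aux {α : Type*} (s : Finset α) (f : α → ℤ)
    (h : ∀ e ∈ s, f e = 1 ∨ f e = -1) :
    ∑ e ∈ s, f e = 2 * (#{e ∈ s | f e = 1} : ℤ) - #s := by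
  classical
  have h1 : ∑ e ∈ {e ∈ s | f e = 1}, f e = (#{e ∈ s | f e = 1} : ℤ) := by
    rw [Finset.sum_congr rfl fun e he => (Finset.mem_filter.1 he).2]
    simp
  have h2 : ∑ e ∈ {e ∈ s | ¬ f e = 1}, f e = -((#s : ℤ) - #{e ∈ s | f e = 1}) := by
    have hval : ∀ e ∈ {e ∈ s | ¬ f e = 1}, f e = -1 := fun e he =>
      ((h e (Finset.mem_filter.1 he).1).resolve_left (Finset.mem_filter.1 he).2)
    rw [Finset.sum_congr rfl hval, Finset.sum_const, Finset.filter_not,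
      Finset.card_sdiff_of_subset (Finset.filter_subset _ _), nsmul_eq_mul,
      Nat.cast_sub (Finset.card_le_card (Finset.filter_subset _ _))]
    ring
  rw [← Finset.sum_filter_add_sum_filter_not s (fun e => f e = 1) f, h1, h2]
  ring

/-- for a graph with `n` vertices, `m` edges and minimum degree at
least 1, `γ'ₛ(G) ≥ n - m`. -/
theorem stmt13 {V : Type*} [Fintype V] [DecidableEq V] (G : SimpleGraph V)
    (hδ : ∀ v, 1 ≤ G.degree v) :
    ∀ f : Sym2 V → ℤ, IsSEDF G f →
      (Fintype.card V : ℤ) - G.edgeFinset.card ≤ ∑ e ∈ G.edgeFinset, f e := by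
  classical
  intro f hf
  obtain ⟨hf1, hf2⟩ := hf
  set p : V → ℕ := fun v => #{e ∈ G.incidenceFinset v | f e = 1} with hpdef
  have hinc : ∀ v : V, ∀ e ∈ G.incidenceFinset v, e ∈ G.edgeFinset := by
    intro v e he
    rw [SimpleGraph.mem_incidenceFinset] at he
    exact SimpleGraph.mem_edgeFinset.2 he.1
  have hple : ∀ v, p v ≤ G.degree v := by
    intro v
    rw [← G.card_incidenceFinset_eq_degree]
    exact Finset.card_le_card (Finset.filter_subset _ _)
  -- weight formula
  have hw : ∀ v, vweight G f v = 2 * (p v : ℤ) - G.degree v := by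
    intro v
    rw [vweight, sum_pm_aux _ _ (fun e he => hf1 e (hinc v e he)), G.card_incidenceFinset_eq_degree]
  -- all edges at a vertex with p = 0 are negative
  have hneg : ∀ u, p u = 0 → ∀ e ∈ G.incidenceFinset u, f e = -1 := by
    intro u hu e he
    rcases hf1 e (hinc u e he) with h | h
    · exfalso
      have hmem : e ∈ {e ∈ G.incidenceFinset u | f e = 1} := Finset.mem_filter.2 ⟨he, h⟩
      rw [Finset.card_eq_zero.1 hu] at hmem
      exact absurd hmem (Finset.notMem_empty e)
    · exact h
  -- key inequality from the SEDF condition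
  have hkey : ∀ ⦃u v⦄, G.Adj u v → p u = 0 →
      (G.degree u : ℤ) + G.degree v ≤ 2 * p v := by
    intro u v huv hu
    have he : s(u, v) ∈ G.incidenceFinset u := by
      rw [SimpleGraph.mem_incidenceFinset]
      exact G.mk'_mem_incidenceSet_left_iff.2 huv
    have hfe : f s(u, v) = -1 := hneg u hu _ he
    have h2 := hf2 huv
    rw [hw u, hw v, hfe, hu] at h2
    push_cast at h2
    linarith
  -- main per-vertex bound
  have hb : ∀ v, p v ≠ 0 → #{u ∈ G.neighborFinset v | p u = 0} + 1 ≤ p v := by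
    intro v hv
    rcases Finset.eq_empty_or_nonempty {u ∈ G.neighborFinset v | p u = 0} with h | ⟨u, hu⟩
    · rw [h]
      simpa using Nat.one_le_iff_ne_zero.2 hv
    · obtain ⟨hunb, hu0⟩ := Finset.mem_filter.1 hu
      have hadj : G.Adj v u := (G.mem_neighborFinset _ _).1 hunb
      have hk := hkey hadj.symm hu0
      have hinj : #{u ∈ G.neighborFinset v | p u = 0}
          ≤ #(G.incidenceFinset v \ {e ∈ G.incidenceFinset v | f e = 1}) := by
        apply Finset.card_le_card_of_injOn (fun w => s(v, w))
        · intro w hw'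
          obtain ⟨hwnb, hw0⟩ := Finset.mem_filter.1 hw'
          have hadjw : G.Adj v w := (G.mem_neighborFinset _ _).1 hwnb
          have hmem : s(v, w) ∈ G.incidenceFinset v := by
            rw [SimpleGraph.mem_incidenceFinset]
            exact G.mk'_mem_incidenceSet_left_iff.2 hadjw
          refine Finset.mem_sdiff.2 ⟨hmem, ?_⟩
          intro hmem2
          have h1 := (Finset.mem_filter.1 hmem2).2
          have hmw : s(v, w) ∈ G.incidenceFinset w := by
            rw [SimpleGraph.mem_incidenceFinset]
            exact G.mk'_mem_incidenceSet_right_iff.2 hadjw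
          rw [hneg w hw0 _ hmw] at h1
          norm_num at h1
        · intro a _ b _ hab
          exact Sym2.congr_right.1 hab
      rw [Finset.card_sdiff_of_subset (Finset.filter_subset _ _),
        SimpleGraph.card_incidenceFinset_eq_degree] at hinj
      have hinj' : #{u ∈ G.neighborFinset v | p u = 0} ≤ G.degree v - p v := hinj
      have h1 := hδ u
      have hk' : G.degree u + G.degree v ≤ 2 * p v := by exact_mod_cast hk
      have h3 := hple v
      omega
  -- card of vertex set of an edge
  have hcard2 : ∀ a b : V, G.Adj a b → #(univ.filter (fun v => v ∈ s(a, b))) = 2 := by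
    intro a b hab
    have : (univ.filter (fun v => v ∈ s(a, b))) = {a, b} := by
      ext x
      simp [Sym2.mem_iff]
    rw [this, Finset.card_insert_of_notMem (by simp [hab.ne]), Finset.card_singleton]
  -- double counting positive edges
  have hsum_p : ∑ v, p v = 2 * #{e ∈ G.edgeFinset | f e = 1} := by
    have h1 : ∀ v, p v = ∑ e ∈ G.edgeFinset, (if v ∈ e ∧ f e = 1 then 1 else 0) := by
      intro v
      simp only [hpdef]
      rw [G.incidenceFinset_eq_filter, Finset.filter_filter, Finset.card_filter]
    calc ∑ v, p v = ∑ v, ∑ e ∈ G.edgeFinset, (if v ∈ e ∧ f e = 1 then 1 else 0) :=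
          Finset.sum_congr rfl fun v _ => h1 v
      _ = ∑ e ∈ G.edgeFinset, ∑ v, (if v ∈ e ∧ f e = 1 then 1 else 0) := Finset.sum_comm
      _ = ∑ e ∈ G.edgeFinset, (if f e = 1 then #(univ.filter (fun v => v ∈ e)) else 0) := by
          refine Finset.sum_congr rfl fun e _ => ?_
          by_cases h : f e = 1
          · simp only [h, and_true, if_true]
            rw [Finset.card_filter]
          · simp [h]
      _ = ∑ e ∈ {e ∈ G.edgeFinset | f e = 1}, #(univ.filter (fun v => v ∈ e)) :=
          (Finset.sum_filter _ _).symm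
      _ = ∑ e ∈ {e ∈ G.edgeFinset | f e = 1}, 2 := by
          refine Finset.sum_congr rfl fun e he => ?_
          obtain ⟨he1, -⟩ := Finset.mem_filter.1 he
          revert he1
          refine Sym2.ind (fun a b he1 => ?_) e
          exact hcard2 a b (by rwa [SimpleGraph.mem_edgeFinset, SimpleGraph.mem_edgeSet] at he1)
      _ = 2 * #{e ∈ G.edgeFinset | f e = 1} := by
          rw [Finset.sum_const, smul_eq_mul, mul_comm]
  -- double counting zero-vertex neighbors
  have hsum_b : ∑ v, #{u ∈ G.neighborFinset v | p u = 0}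
      = ∑ u ∈ univ.filter (fun u => p u = 0), G.degree u := by
    have h1 : ∀ v, #{u ∈ G.neighborFinset v | p u = 0}
        = ∑ u, (if G.Adj v u ∧ p u = 0 then 1 else 0) := by
      intro v
      rw [SimpleGraph.neighborFinset_eq_filter, Finset.filter_filter, Finset.card_filter]
    calc ∑ v, #{u ∈ G.neighborFinset v | p u = 0}
        = ∑ v, ∑ u, (if G.Adj v u ∧ p u = 0 then 1 else 0) :=
          Finset.sum_congr rfl fun v _ => h1 v
      _ = ∑ u, ∑ v, (if G.Adj v u ∧ p u = 0 then 1 else 0) := Finset.sum_comm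
      _ = ∑ u, (if p u = 0 then G.degree u else 0) := by
          refine Finset.sum_congr rfl fun u _ => ?_
          by_cases h : p u = 0
          · rw [if_pos h, ← Finset.card_filter]
            have heq : (univ.filter (fun v => G.Adj v u ∧ p u = 0)) = G.neighborFinset u := by
              ext v
              simp [h, SimpleGraph.mem_neighborFinset, G.adj_comm]
            rw [heq]
            rfl
          · simp [h]
      _ = ∑ u ∈ univ.filter (fun u => p u = 0), G.degree u := (Finset.sum_filter _ _).symm
  -- vertices with p = 0 have no neighbors with p = 0
  have hBzero : ∀ v, p v = 0 → #{u ∈ G.neighborFinset v | p u = 0} = 0 := by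
    intro v hv
    rw [Finset.card_eq_zero, Finset.filter_eq_empty_iff]
    intro u hu h0
    have hadj : G.Adj v u := (G.mem_neighborFinset _ _).1 hu
    have hk := hkey hadj hv
    have hk' : G.degree v + G.degree u ≤ 2 * p u := by exact_mod_cast hk
    have h1 := hδ u
    have h2 := hδ v
    omega
  -- main counting argument
  have hmain : Fintype.card V ≤ ∑ v, p v := by
    have hAB : #(univ.filter (fun v => p v ≠ 0)) + #(univ.filter (fun v => p v = 0))
        = Fintype.card V := by
      rw [add_comm]
      exact Finset.card_filter_add_card_filter_not (fun v => p v = 0)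
    have hs1 : ∑ v ∈ univ.filter (fun v => p v ≠ 0), p v = ∑ v, p v :=
      Finset.sum_filter_ne_zero _
    have hs2 : ∑ v ∈ univ.filter (fun v => p v ≠ 0),
        (#{u ∈ G.neighborFinset v | p u = 0} + 1)
        ≤ ∑ v ∈ univ.filter (fun v => p v ≠ 0), p v :=
      Finset.sum_le_sum fun v hv => hb v (Finset.mem_filter.1 hv).2
    have hs3 : ∑ v ∈ univ.filter (fun v => p v ≠ 0), #{u ∈ G.neighborFinset v | p u = 0}
        = ∑ v, #{u ∈ G.neighborFinset v | p u = 0} := by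
      refine Finset.sum_subset (Finset.subset_univ _) ?_
      intro x _ hx
      apply hBzero
      by_contra h
      exact hx (Finset.mem_filter.2 ⟨Finset.mem_univ x, h⟩)
    have hs4 : #(univ.filter (fun v => p v = 0))
        ≤ ∑ u ∈ univ.filter (fun u => p u = 0), G.degree u := by
      calc #(univ.filter (fun v => p v = 0))
          = ∑ _u ∈ univ.filter (fun v => p v = 0), 1 := by simp
        _ ≤ _ := Finset.sum_le_sum fun u _ => hδ u
    calc Fintype.card V
        = #(univ.filter (fun v => p v ≠ 0)) + #(univ.filter (fun v => p v = 0)) := hAB.symm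
      _ ≤ #(univ.filter (fun v => p v ≠ 0))
          + ∑ u ∈ univ.filter (fun u => p u = 0), G.degree u := by omega
      _ = #(univ.filter (fun v => p v ≠ 0)) + ∑ v, #{u ∈ G.neighborFinset v | p u = 0} := by
          rw [hsum_b]
      _ = #(univ.filter (fun v => p v ≠ 0))
          + ∑ v ∈ univ.filter (fun v => p v ≠ 0), #{u ∈ G.neighborFinset v | p u = 0} := by
          rw [hs3]
      _ = ∑ v ∈ univ.filter (fun v => p v ≠ 0),
          (#{u ∈ G.neighborFinset v | p u = 0} + 1) := by
          rw [Finset.sum_add_distrib, Finset.sum_const, smul_eq_mul, mul_one, add_comm]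
      _ ≤ ∑ v ∈ univ.filter (fun v => p v ≠ 0), p v := hs2
      _ = ∑ v, p v := hs1
  -- conclude
  have hsum_f : ∑ e ∈ G.edgeFinset, f e
      = 2 * (#{e ∈ G.edgeFinset | f e = 1} : ℤ) - #G.edgeFinset :=
    sum_pm_aux _ _ hf1
  have hfinal : (Fintype.card V : ℤ) ≤ 2 * (#{e ∈ G.edgeFinset | f e = 1} : ℤ) := by
    have := hmain.trans hsum_p.le
    exact_mod_cast this
  rw [hsum_f]
  linarith
end
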